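/- arXiv:1111.4635 — 8 statements merged into one kernel-verified Lean document; each statement's English description precedes it below -/
import Mathlib

section
/- Let f : ℤ₂ → ℤ₂ be a 1-Lipschitz transitive map and let g : ℤ₂ → ℤ₂ be a derivative of f modulo 4 with parameter N. Then for every x₀ ∈ ℤ₂ there exists a sequence y : ℕ → ℤ/2ℤ, periodic with period 2^N, such that for every n ≥ N + 1 and every i ≥ 0 the following identity holds in ℤ/2ℤ: δ_n(f^[i+2^(n−1)](x₀)) = δ_{n−1}(f^[i](x₀)) + δ_n(f^[i](x₀)) + δ_{n−1}(x₀) + δ_n(x₀) + δ_n(f^[2^(n−1)](x₀)) + y(i). (In particular the sequence y does not depend on n.) -/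
open Function Finset

/-- `a ≡ b (mod 2^s)` in the 2-adic integers. -/
def CongMod (s : ℕ) (a b : ℤ_[2]) : Prop := ‖a - b‖ ≤ ((2 : ℝ) ^ s)⁻¹

/-- `f` is 1-Lipschitz for the 2-adic norm (a T-function). -/
def OneLip (f : ℤ_[2] → ℤ_[2]) : Prop := ∀ a b : ℤ_[2], ‖f a - f b‖ ≤ ‖a - b‖

/-- `f` is transitive modulo `2^n`. -/
def TransMod (f : ℤ_[2] → ℤ_[2]) (n : ℕ) : Prop :=
  ∀ x y : ℤ_[2], ∃ i < 2 ^ n, CongMod n (f^[i] x) y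

/-- `f` is transitive (single cycle modulo every power of 2). -/
def TransitiveT (f : ℤ_[2] → ℤ_[2]) : Prop := ∀ n : ℕ, 1 ≤ n → TransMod f n

/-- `f` is bijective modulo `2^n`. -/
def BijMod (f : ℤ_[2] → ℤ_[2]) (n : ℕ) : Prop :=
  (∀ a b : ℤ_[2], CongMod n (f a) (f b) → CongMod n a b) ∧
  (∀ y : ℤ_[2], ∃ x : ℤ_[2], CongMod n (f x) y)

/-- `f` is bijective (measure-preserving T-function). -/
def BijectiveT (f : ℤ_[2] → ℤ_[2]) : Prop := ∀ n : ℕ, 1 ≤ n → BijMod f n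

/-- `g` is a derivative of `f` modulo `2^M` with parameter `K`. -/
def IsDerivMod (f g : ℤ_[2] → ℤ_[2]) (M K : ℕ) : Prop :=
  ∀ x h : ℤ_[2], ‖h‖ ≤ ((2 : ℝ) ^ K)⁻¹ →
    ‖f (x + h) - f x - g x * h‖ ≤ ((2 : ℝ) ^ M)⁻¹ * ‖h‖

/-- The `n`-th binary digit of a 2-adic integer, as an element of `ZMod 2`.
`PadicInt.appr x n` is the unique integer in `{0, …, 2^n - 1}` congruent to `x` mod `2^n`. -/
noncomputable def delta (n : ℕ) (x : ℤ_[2]) : ZMod 2 :=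
  (((x.appr (n + 1) - x.appr n) / 2 ^ n : ℕ) : ZMod 2)

lemma LR_dvd_iff_norm (s : ℕ) (z : ℤ_[2]) : (2^s : ℤ_[2]) ∣ z ↔ ‖z‖ ≤ ((2:ℝ)^s)⁻¹ := by
  rw [← zpow_natCast (2:ℝ), ← zpow_neg]
  rw [show ((2:ℝ))^(-(s:ℤ)) = ((2:ℕ):ℝ)^(-(s:ℤ)) by norm_num]
  rw [PadicInt.norm_le_pow_iff_mem_span_pow, Ideal.mem_span_singleton]
  norm_num

lemma LR_dvd_nat (s : ℕ) (a b : ℕ) : (2^s : ℤ_[2]) ∣ ((a:ℤ_[2]) - b) ↔ (2^s : ℤ) ∣ ((a:ℤ) - b) := by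
  have h : ((a:ℤ_[2]) - b) = (((a - b : ℤ)) : ℤ_[2]) := by push_cast; ring
  rw [h, show (2:ℤ_[2]) = ((2:ℕ):ℤ_[2]) by norm_num, PadicInt.pow_p_dvd_int_iff]
  norm_num

lemma LR_appr_dvd (s : ℕ) (x : ℤ_[2]) : (2^s : ℤ_[2]) ∣ (x - x.appr s) := by
  have := PadicInt.appr_spec s x
  rwa [Ideal.mem_span_singleton, show ((2:ℕ):ℤ_[2]) = (2:ℤ_[2]) by norm_num] at this

lemma LR_appr_unique (s : ℕ) (x : ℤ_[2]) (t : ℕ) (ht : t < 2^s)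
    (h : (2^s : ℤ_[2]) ∣ (x - t)) : x.appr s = t := by
  have h2 : (2^s : ℤ_[2]) ∣ ((x.appr s : ℤ_[2]) - t) := by
    have := dvd_sub (LR_appr_dvd s x) h
    simpa using (dvd_neg.2 this)
  rw [LR_dvd_nat] at h2
  have hlt := PadicInt.appr_lt x s
  have h1 : ((x.appr s : ℤ)) < 2^s := by exact_mod_cast hlt
  have h2' : ((t : ℤ)) < 2^s := by exact_mod_cast ht
  have habs : |(x.appr s : ℤ) - t| < 2^s := abs_lt.2 ⟨by omega, by omega⟩
  have := Int.eq_zero_of_abs_lt_dvd h2 habs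
  omega

lemma LR_delta_eq (m : ℕ) (x : ℤ_[2]) (e o : ℕ) (he : e ≤ 1) (ho : o < 2^m)
    (h : (2^(m+1) : ℤ_[2]) ∣ (x - ((e * 2^m + o : ℕ) : ℤ_[2]))) : delta m x = (e : ZMod 2) := by
  have hb : e * 2^m + o < 2^(m+1) := by
    have : e * 2^m ≤ 2^m := by nlinarith [Nat.one_le_two_pow (n := m)]
    have h2 : (2:ℕ)^(m+1) = 2^m + 2^m := by ring
    omega
  have h1 : x.appr (m+1) = e * 2^m + o := LR_appr_unique _ _ _ hb h
  have h0 : x.appr m = o := by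
    apply LR_appr_unique _ _ _ ho
    have hd : (2^m : ℤ_[2]) ∣ (x - ((e * 2^m + o : ℕ) : ℤ_[2])) :=
      dvd_trans (pow_dvd_pow 2 (Nat.le_succ m)) h
    have : x - (o:ℤ_[2]) = (x - ((e * 2^m + o : ℕ) : ℤ_[2])) + (e:ℤ_[2]) * 2^m := by
      push_cast; ring
    rw [this]
    exact dvd_add hd ⟨e, by ring⟩
  rw [delta, h1, h0]
  congr 1
  have : e * 2^m + o - o = e * 2^m := by omega
  rw [this, Nat.mul_div_cancel _ (Nat.pow_pos (by norm_num))]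

lemma LR_delta_decomp (m : ℕ) (x : ℤ_[2]) : ∃ b c s : ℕ, b ≤ 1 ∧ c ≤ 1 ∧ s < 2^m ∧
    (2^(m+2) : ℤ_[2]) ∣ (x - ((c * 2^(m+1) + b * 2^m + s : ℕ) : ℤ_[2])) ∧
    delta m x = (b : ZMod 2) ∧ delta (m+1) x = (c : ZMod 2) := by
  set r := x.appr (m+2) with hr
  have hrlt : r < 2^(m+2) := PadicInt.appr_lt x (m+2)
  have hq4 : r / 2^m < 4 := by
    have : (2:ℕ)^(m+2) = 2^m * 4 := by ring
    rw [this] at hrlt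
    exact Nat.div_lt_of_lt_mul (by omega)
  refine ⟨(r / 2^m) % 2, (r / 2^m) / 2, r % 2^m, Nat.le_of_lt_succ (Nat.mod_lt _ (by norm_num)),
    by omega, Nat.mod_lt _ (Nat.pow_pos (by norm_num)), ?_, ?_, ?_⟩
  · have hrep : (r / 2^m) / 2 * 2^(m+1) + (r / 2^m) % 2 * 2^m + r % 2^m = r := by
      have h1 : r = 2^m * (r / 2^m) + r % 2^m := (Nat.div_add_mod _ _).symm
      have h2 : r / 2^m = 2 * ((r / 2^m) / 2) + (r / 2^m) % 2 := (Nat.div_add_mod _ _).symm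
      have h3 : (2:ℕ)^(m+1) = 2^m * 2 := by ring
      rw [h3]; conv_rhs => rw [h1, h2]
      ring
    rw [hrep]
    exact LR_appr_dvd (m+2) x
  · apply LR_delta_eq m x _ _ (Nat.le_of_lt_succ (Nat.mod_lt _ (by norm_num)))
      (Nat.mod_lt _ (Nat.pow_pos (by norm_num)))
    have key : x - (((r / 2^m) % 2 * 2^m + r % 2^m : ℕ) : ℤ_[2]) =
        (x - (r : ℤ_[2])) + (((r / 2^m) / 2 : ℕ) : ℤ_[2]) * 2^(m+1) := by
      have h1 : r = 2^m * (r / 2^m) + r % 2^m := (Nat.div_add_mod _ _).symm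
      have h2 : r / 2^m = 2 * ((r / 2^m) / 2) + (r / 2^m) % 2 := (Nat.div_add_mod _ _).symm
      have h3 : (r:ℤ_[2]) = ((r / 2^m) / 2 : ℕ) * 2^(m+1) + ((r / 2^m) % 2 : ℕ) * 2^m + (r % 2^m : ℕ) := by
        push_cast
        have h4 : (r:ℤ_[2]) = 2^m * ((2 * ((r / 2^m) / 2) + (r / 2^m) % 2 : ℕ)) + (r % 2^m : ℕ) := by
          rw [← h2]; exact_mod_cast congrArg (Nat.cast : ℕ → ℤ_[2]) h1
        push_cast at h4
        rw [h4]; ring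
      rw [h3]; push_cast; ring
    rw [key]
    exact dvd_add (dvd_trans (pow_dvd_pow 2 (by omega)) (LR_appr_dvd (m+2) x))
      ⟨((r / 2^m) / 2 : ℕ), by ring⟩
  · apply LR_delta_eq (m+1) x _ ((r / 2^m) % 2 * 2^m + r % 2^m) (by omega)
    · have : (2:ℕ)^(m+1) = 2^m + 2^m := by ring
      have := Nat.mod_lt r (show 0 < 2^m from Nat.pow_pos (by norm_num))
      have h5 : (r / 2^m) % 2 * 2^m ≤ 2^m := by
        have h6 : (r / 2^m) % 2 ≤ 1 := Nat.le_of_lt_succ (Nat.mod_lt _ (by norm_num))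
        calc (r / 2^m) % 2 * 2^m ≤ 1 * 2^m := Nat.mul_le_mul_right _ h6
        _ = 2^m := one_mul _
      omega
    · have hrep : (r / 2^m) / 2 * 2^(m+1) + ((r / 2^m) % 2 * 2^m + r % 2^m) = r := by
        have h1 : r = 2^m * (r / 2^m) + r % 2^m := (Nat.div_add_mod _ _).symm
        have h2 : r / 2^m = 2 * ((r / 2^m) / 2) + (r / 2^m) % 2 := (Nat.div_add_mod _ _).symm
        have h3 : (2:ℕ)^(m+1) = 2^m * 2 := by ring
        rw [h3]; conv_rhs => rw [h1, h2]
        ring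
      rw [show m + 1 + 1 = m + 2 from rfl, hrep]
      exact LR_appr_dvd (m+2) x

lemma LR_delta_add (m : ℕ) (x d : ℤ_[2]) (a : ℕ) (ha : a ≤ 1)
    (hd : (2^(m+2) : ℤ_[2]) ∣ (d - ((2^m + a * 2^(m+1) : ℕ) : ℤ_[2]))) :
    delta m (x + d) = delta m x + 1 ∧
    delta (m+1) (x + d) = delta (m+1) x + delta m x + (a : ZMod 2) := by
  obtain ⟨b, c, s, hb, hc, hs, hx, hdb, hdc⟩ := LR_delta_decomp m x
  set K := 2 * c + 2 * a + b + 1 with hK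
  set k := K % 4 with hk
  have hk4 : k < 4 := Nat.mod_lt _ (by norm_num)
  have hmain : (2^(m+2) : ℤ_[2]) ∣ ((x + d) - ((2^m * k + s : ℕ) : ℤ_[2])) := by
    have hKk : (K : ℤ_[2]) = 4 * (K / 4 : ℕ) + (k : ℕ) := by
      exact_mod_cast congrArg (Nat.cast : ℕ → ℤ_[2]) (Nat.div_add_mod K 4).symm
    have hsplit : (x + d) - ((2^m * k + s : ℕ) : ℤ_[2]) =
        (x - ((c * 2^(m+1) + b * 2^m + s : ℕ) : ℤ_[2])) +
        (d - ((2^m + a * 2^(m+1) : ℕ) : ℤ_[2])) + 2^(m+2) * ((K / 4 : ℕ) : ℤ_[2]) := by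
      have expand : ((c * 2^(m+1) + b * 2^m + s : ℕ) : ℤ_[2]) + ((2^m + a * 2^(m+1) : ℕ) : ℤ_[2])
          = 2^m * (K : ℤ_[2]) + (s : ℕ) := by
        push_cast [hK]; ring
      have : ((2^m * k + s : ℕ) : ℤ_[2]) = 2^m * (k : ℕ) + (s : ℕ) := by push_cast; ring
      rw [this, sub_add_sub_comm, expand, hKk]
      push_cast
      ring
    rw [hsplit]
    exact dvd_add (dvd_add hx hd) ⟨((K / 4 : ℕ) : ℤ_[2]), rfl⟩
  have h1 : delta m (x + d) = ((k % 2 : ℕ) : ZMod 2) := by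
    apply LR_delta_eq m _ _ s (Nat.le_of_lt_succ (Nat.mod_lt _ (by norm_num))) hs
    have : (x + d) - ((k % 2 * 2^m + s : ℕ) : ℤ_[2]) =
        ((x + d) - ((2^m * k + s : ℕ) : ℤ_[2])) + ((k / 2 : ℕ) : ℤ_[2]) * 2^(m+1) := by
      have hkk : (k : ℤ_[2]) = 2 * (k / 2 : ℕ) + (k % 2 : ℕ) := by
        exact_mod_cast congrArg (Nat.cast : ℕ → ℤ_[2]) (Nat.div_add_mod k 2).symm
      push_cast
      rw [hkk]
      ring
    rw [this]
    exact dvd_add (dvd_trans (pow_dvd_pow 2 (by omega)) hmain) ⟨((k / 2 : ℕ) : ℤ_[2]), by ring⟩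
  have h2 : delta (m+1) (x + d) = ((k / 2 : ℕ) : ZMod 2) := by
    apply LR_delta_eq (m+1) _ _ (k % 2 * 2^m + s) (by omega)
    · have h6 : k % 2 ≤ 1 := Nat.le_of_lt_succ (Nat.mod_lt _ (by norm_num))
      have : k % 2 * 2^m ≤ 1 * 2^m := Nat.mul_le_mul_right _ h6
      have h7 : (2:ℕ)^(m+1) = 2^m + 2^m := by ring
      omega
    · have : (k / 2 * 2^(m+1) + (k % 2 * 2^m + s) : ℕ) = (2^m * k + s : ℕ) := by
        have hkk : k = 2 * (k / 2) + k % 2 := (Nat.div_add_mod k 2).symm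
        have h3 : (2:ℕ)^(m+1) = 2^m * 2 := by ring
        rw [h3]; conv_rhs => rw [hkk]
        ring
      rw [show m + 1 + 1 = m + 2 from rfl, this]
      exact hmain
  refine ⟨?_, ?_⟩
  · rw [h1, hdb]
    interval_cases b <;> interval_cases c <;> interval_cases a <;> simp [hk, hK] <;> decide
  · rw [h2, hdc, hdb]
    interval_cases b <;> interval_cases c <;> interval_cases a <;> simp [hk, hK] <;> decide

lemma LR_cong_iff_dvd (s : ℕ) (a b : ℤ_[2]) : CongMod s a b ↔ (2^s : ℤ_[2]) ∣ (a - b) :=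
  (LR_dvd_iff_norm s (a-b)).symm

lemma LR_lip_dvd {f : ℤ_[2] → ℤ_[2]} (hf : OneLip f) (s : ℕ) (a b : ℤ_[2])
    (h : (2^s : ℤ_[2]) ∣ (a - b)) : (2^s : ℤ_[2]) ∣ (f a - f b) := by
  rw [LR_dvd_iff_norm] at h ⊢
  exact le_trans (hf a b) h

lemma LR_cycle_level {f : ℤ_[2] → ℤ_[2]} (hf : OneLip f) (hft : TransitiveT f)
    (s : ℕ) (hs : 1 ≤ s) (x : ℤ_[2]) :
    ((2^s : ℤ_[2]) ∣ (f^[2^s] x - x)) ∧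
    ∀ j, 0 < j → j < 2^s → ¬ ((2^s : ℤ_[2]) ∣ (f^[j] x - x)) := by
  haveI : NeZero (2^s) := ⟨pow_ne_zero _ two_ne_zero⟩
  set π := @PadicInt.toZModPow 2 _ s with hπ
  have hbridge : ∀ a b : ℤ_[2], π a = π b ↔ (2^s : ℤ_[2]) ∣ (a - b) := by
    intro a b
    rw [← sub_eq_zero, ← map_sub, ← RingHom.mem_ker, PadicInt.ker_toZModPow,
      Ideal.mem_span_singleton, show ((2:ℕ):ℤ_[2]) = (2:ℤ_[2]) by norm_num]
  set ρ : ℕ → ZMod (2^s) := fun i => π (f^[i] x) with hρ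
  have hstep : ∀ i j, ρ i = ρ j → ρ (i+1) = ρ (j+1) := by
    intro i j h
    simp only [hρ, iterate_succ_apply']
    rw [hbridge] at h ⊢
    exact LR_lip_dvd hf s _ _ h
  have hshift : ∀ i j, ρ i = ρ j → ∀ t, ρ (i+t) = ρ (j+t) := by
    intro i j h t
    induction t with
    | zero => simpa using h
    | succ t ih => rw [show i+(t+1) = (i+t)+1 by omega, show j+(t+1) = (j+t)+1 by omega]
                   exact hstep _ _ ih
  have hex : ∃ p, 1 ≤ p ∧ ρ p = ρ 0 := by
    obtain ⟨t, ht, hc⟩ := hft s hs (f x) x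
    refine ⟨t+1, by omega, ?_⟩
    rw [LR_cong_iff_dvd] at hc
    have : ρ (t+1) = π x := by
      simp only [hρ, iterate_succ_apply]
      rw [hbridge]; exact hc
    simpa [hρ] using this
  have hexle : ∃ p, (1 ≤ p ∧ ρ p = ρ 0) ∧ p ≤ 2^s := by
    obtain ⟨t, ht, hc⟩ := hft s hs (f x) x
    refine ⟨t+1, ⟨by omega, ?_⟩, by omega⟩
    rw [LR_cong_iff_dvd] at hc
    have : ρ (t+1) = π x := by
      simp only [hρ, iterate_succ_apply]
      rw [hbridge]; exact hc
    simpa [hρ] using this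
  set P := Nat.find hex with hPdef
  obtain ⟨hP1, hPρ⟩ : 1 ≤ P ∧ ρ P = ρ 0 := Nat.find_spec hex
  have hPle : P ≤ 2^s := by
    obtain ⟨p, hp, hple⟩ := hexle
    exact le_trans (Nat.find_min' hex hp) hple
  have hper : ∀ i, ρ (i + P) = ρ i := by
    intro i
    have := hshift P 0 hPρ i
    simpa [Nat.add_comm] using this
  have hmod : ∀ i, ρ i = ρ (i % P) := by
    have key : ∀ q r, ρ (r + q * P) = ρ r := by
      intro q
      induction q with
      | zero => simp
      | succ q ih => intro r
                     rw [show r + (q+1) * P = (r + q * P) + P by ring, hper]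
                     exact ih r
    intro i
    conv_lhs => rw [← Nat.mod_add_div' i P]
    exact key _ _
  have hinj : ∀ a b, a < b → b < P → ρ a ≠ ρ b := by
    intro a b hab hbP h
    have h2 := hshift a b h (P - b)
    rw [show b + (P - b) = P by omega, hPρ] at h2
    have hq : a + (P - b) < P := by omega
    have hq1 : 1 ≤ a + (P - b) := by omega
    exact Nat.find_min hex hq ⟨hq1, h2⟩
  have hsurj : ∀ y : ZMod (2^s), ∃ i < P, ρ i = y := by
    intro y
    obtain ⟨i, hi, hc⟩ := hft s hs x ((y.val : ℕ) : ℤ_[2])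
    rw [LR_cong_iff_dvd] at hc
    have h1 : ρ i = y := by
      have h0 : ρ i = π ((y.val : ℕ) : ℤ_[2]) := (hbridge _ _).2 hc
      rw [h0, map_natCast]
      exact ZMod.natCast_rightInverse y
    exact ⟨i % P, Nat.mod_lt _ hP1, (hmod i).symm.trans h1⟩
  have hcard : P = 2^s := by
    refine le_antisymm hPle ?_
    choose idx hidx hρy using hsurj
    have hFinj : Function.Injective (fun y : ZMod (2^s) => (⟨idx y, hidx y⟩ : Fin P)) := by
      intro y1 y2 h
      have : idx y1 = idx y2 := congrArg Fin.val h
      rw [← hρy y1, ← hρy y2, this]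
    have := Fintype.card_le_of_injective _ hFinj
    rwa [ZMod.card, Fintype.card_fin] at this
  constructor
  · have := hper 0
    rw [Nat.zero_add, hcard] at this
    exact (hbridge _ _).1 (by simpa [hρ] using this)
  · intro j hj0 hjs hdvd
    have : ρ j = ρ 0 := by
      have : π (f^[j] x) = π x := (hbridge _ _).2 hdvd
      simpa [hρ] using this
    exact hinj 0 j hj0 (by omega) this.symm

lemma LR_cycle {f : ℤ_[2] → ℤ_[2]} (hf : OneLip f) (hft : TransitiveT f)
    (k : ℕ) (x : ℤ_[2]) :
    ((2^k : ℤ_[2]) ∣ (f^[2^k] x - x)) ∧ ¬ ((2^(k+1) : ℤ_[2]) ∣ (f^[2^k] x - x)) := by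
  constructor
  · rcases Nat.eq_zero_or_pos k with hk | hk
    · subst hk; simpa using one_dvd _
    · exact (LR_cycle_level hf hft k hk x).1
  · exact (LR_cycle_level hf hft (k+1) (by omega) x).2 (2^k)
      (Nat.pow_pos (by norm_num)) (Nat.pow_lt_pow_right (by norm_num) (by omega))

lemma LR_dvd_int (s : ℕ) (z : ℤ) : (2^s : ℤ_[2]) ∣ ((z : ℤ_[2])) ↔ (2^s : ℤ) ∣ z := by
  rw [show (2:ℤ_[2]) = ((2:ℕ):ℤ_[2]) by norm_num, PadicInt.pow_p_dvd_int_iff]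
  norm_num

lemma LR_rep (m : ℕ) (d : ℤ_[2]) (h1 : (2^m : ℤ_[2]) ∣ d) (h2 : ¬ (2^(m+1) : ℤ_[2]) ∣ d) :
    ∃ a : ℕ, a ≤ 1 ∧ (2^(m+2) : ℤ_[2]) ∣ (d - ((2^m + a * 2^(m+1) : ℕ) : ℤ_[2])) ∧
      delta (m+1) d = (a : ZMod 2) := by
  set r := d.appr (m+2) with hrdef
  have hr : (2^(m+2) : ℤ_[2]) ∣ (d - (r : ℤ_[2])) := LR_appr_dvd (m+2) d
  have hrlt : r < 2^(m+2) := PadicInt.appr_lt d (m+2)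
  have hrd : (2^m : ℤ_[2]) ∣ (r : ℤ_[2]) := by
    have : (r : ℤ_[2]) = d - (d - (r : ℤ_[2])) := by ring
    rw [this]
    exact dvd_sub h1 (dvd_trans (pow_dvd_pow 2 (by omega)) hr)
  have hrdn : (2^m : ℕ) ∣ r := by
    have := (LR_dvd_int m (r : ℤ)).1 (by exact_mod_cast hrd)
    exact_mod_cast this
  set q := r / 2^m with hqdef
  have hrq : r = 2^m * q := (Nat.mul_div_cancel' hrdn).symm
  have hq4 : q < 4 := by
    have : (2:ℕ)^(m+2) = 2^m * 4 := by ring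
    rw [this] at hrlt
    rw [hqdef]
    exact Nat.div_lt_of_lt_mul (by omega)
  have hqodd : q % 2 = 1 := by
    rcases Nat.mod_two_eq_zero_or_one q with h | h
    · exfalso
      apply h2
      have h2q : (2:ℕ) ∣ q := Nat.dvd_of_mod_eq_zero h
      have : (2^(m+1) : ℕ) ∣ r := by
        rw [hrq, pow_succ]
        exact Nat.mul_dvd_mul_left _ h2q
      obtain ⟨c, hc⟩ := this
      have hd : d = (d - (r:ℤ_[2])) + (r:ℤ_[2]) := by ring
      rw [hd]
      refine dvd_add (dvd_trans (pow_dvd_pow 2 (by omega)) hr) ?_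
      rw [hc]
      push_cast
      exact ⟨c, by ring⟩
    · exact h
  refine ⟨q / 2, by omega, ?_, ?_⟩
  · have hrrep : r = 2^m + (q / 2) * 2^(m+1) := by
      have hq2 : q = 2 * (q / 2) + 1 := by omega
      rw [hrq, pow_succ]
      conv_lhs => rw [hq2]
      ring
    rw [← hrrep]
    exact hr
  · apply LR_delta_eq (m+1) d (q/2) (2^m) (by omega)
      (Nat.pow_lt_pow_right (by norm_num) (by omega))
    have : (q / 2 * 2^(m+1) + 2^m : ℕ) = (2^m + (q/2) * 2^(m+1) : ℕ) := by omega
    rw [show m + 1 + 1 = m + 2 from rfl, this]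
    have hrrep : r = 2^m + (q / 2) * 2^(m+1) := by
      have hq2 : q = 2 * (q / 2) + 1 := by omega
      rw [hrq, pow_succ]
      conv_lhs => rw [hq2]
      ring
    rw [← hrrep]
    exact hr

lemma LR_step {f g : ℤ_[2] → ℤ_[2]} {N : ℕ} (hg : IsDerivMod f g 2 N)
    (m : ℕ) (hm : N ≤ m) (x d d' : ℤ_[2])
    (hd' : d' = f (x + d) - f x)
    (h1 : (2^m : ℤ_[2]) ∣ d) (h2 : ¬ (2^(m+1) : ℤ_[2]) ∣ d)
    (h1' : (2^m : ℤ_[2]) ∣ d') (h2' : ¬ (2^(m+1) : ℤ_[2]) ∣ d') :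
    delta (m+1) d' = delta (m+1) d + delta 1 (g x) := by
  obtain ⟨a, ha, hrep, hda⟩ := LR_rep m d h1 h2
  obtain ⟨a', ha', hrep', hda'⟩ := LR_rep m d' h1' h2'
  -- derivative estimate
  have hnd : ‖d‖ ≤ ((2:ℝ)^m)⁻¹ := (LR_dvd_iff_norm m d).1 h1
  have hNd : ‖d‖ ≤ ((2:ℝ)^N)⁻¹ := le_trans hnd (by
    apply inv_anti₀ (by positivity)
    exact pow_le_pow_right₀ (by norm_num) hm)
  have hder := hg x d hNd
  have hderdvd : (2^(m+2) : ℤ_[2]) ∣ (d' - g x * d) := by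
    rw [LR_dvd_iff_norm, hd']
    calc ‖f (x + d) - f x - g x * d‖ ≤ ((2:ℝ)^2)⁻¹ * ‖d‖ := hder
      _ ≤ ((2:ℝ)^2)⁻¹ * ((2:ℝ)^m)⁻¹ := by
          apply mul_le_mul_of_nonneg_left hnd (by positivity)
      _ = ((2:ℝ)^(m+2))⁻¹ := by rw [← mul_inv, ← pow_add]; ring_nf
  -- decompose g x mod 4
  obtain ⟨w0, w1, s0, hw0, hw1, hs0, hgx, _, hgd1⟩ := LR_delta_decomp 0 (g x)
  have hs00 : s0 = 0 := by omega
  subst hs00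
  have hgx4 : (2^2 : ℤ_[2]) ∣ (g x - ((w0 + 2 * w1 : ℕ) : ℤ_[2])) := by
    have : (w1 * 2^(0+1) + w0 * 2^0 + 0 : ℕ) = (w0 + 2 * w1 : ℕ) := by ring
    rw [← this]
    exact hgx
  -- combine
  set A : ℤ_[2] := ((2^m + a * 2^(m+1) : ℕ) : ℤ_[2]) with hA
  set A' : ℤ_[2] := ((2^m + a' * 2^(m+1) : ℕ) : ℤ_[2]) with hA'
  set E : ℤ_[2] := ((w0 + 2 * w1 : ℕ) : ℤ_[2]) with hE
  have hAdvd : (2^m : ℤ_[2]) ∣ A := ⟨1 + a * 2, by rw [hA]; push_cast; ring⟩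
  have T3 : (2^(m+2) : ℤ_[2]) ∣ (g x * d - g x * A) := by
    rw [← mul_sub]
    exact Dvd.dvd.mul_left hrep (g x)
  have T4 : (2^(m+2) : ℤ_[2]) ∣ ((g x - E) * A) := by
    rw [show (2:ℤ_[2])^(m+2) = 2^2 * 2^m by ring]
    exact mul_dvd_mul hgx4 hAdvd
  have hkey : (2^(m+2) : ℤ_[2]) ∣ (E * A - A') := by
    have hsplit : E * A - A' = -(d' - g x * d) + (d' - A') - (g x * d - g x * A)
        - ((g x - E) * A) := by ring
    rw [hsplit]
    exact dvd_sub (dvd_sub (dvd_add (dvd_neg.2 hderdvd) hrep') T3) T4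
  have hkeyZ : (2^(m+2) : ℤ) ∣ ((w0 + 2*w1 : ℤ) * (2^m + a * 2^(m+1)) - (2^m + a' * 2^(m+1))) := by
    rw [← LR_dvd_int]
    have : (((w0 + 2*w1 : ℤ) * (2^m + a * 2^(m+1)) - (2^m + a' * 2^(m+1)) : ℤ) : ℤ_[2])
        = E * A - A' := by rw [hE, hA, hA']; push_cast; ring
    rw [this]
    exact hkey
  have hw4 : (4:ℤ) ∣ ((w0 + 2*w1 : ℤ) * (1 + 2*a) - (1 + 2*a')) := by
    have hz : ((w0 + 2*w1 : ℤ) * (2^m + a * 2^(m+1)) - (2^m + a' * 2^(m+1)))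
        = 2^m * ((w0 + 2*w1 : ℤ) * (1 + 2*a) - (1 + 2*a')) := by
      rw [show (2:ℤ)^(m+1) = 2^m * 2 by ring]; ring
    rw [hz, show (2:ℤ)^(m+2) = 2^m * 4 by ring,
      mul_dvd_mul_iff_left (a := (2:ℤ)^m) (pow_ne_zero m two_ne_zero)] at hkeyZ
    exact hkeyZ
  rw [hda', hda, hgd1]
  interval_cases a <;> interval_cases a' <;> interval_cases w0 <;> interval_cases w1 <;>
    first
    | decide
    | (exfalso; omega)

section Main
variable {f g : ℤ_[2] → ℤ_[2]} {N : ℕ}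

lemma LR_dvd1 (hf : OneLip f) (hft : TransitiveT f) (x₀ : ℤ_[2]) (k i : ℕ) :
    (2^k : ℤ_[2]) ∣ (f^[i + 2^k] x₀ - f^[i] x₀) := by
  rw [show i + 2^k = 2^k + i by omega, iterate_add_apply]
  exact (LR_cycle hf hft k (f^[i] x₀)).1

lemma LR_dvd2 (hf : OneLip f) (hft : TransitiveT f) (x₀ : ℤ_[2]) (k i : ℕ) :
    ¬ ((2^(k+1) : ℤ_[2]) ∣ (f^[i + 2^k] x₀ - f^[i] x₀)) := by
  rw [show i + 2^k = 2^k + i by omega, iterate_add_apply]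
  exact (LR_cycle hf hft k (f^[i] x₀)).2

lemma LR_hsum (hf : OneLip f) (hft : TransitiveT f) (hg : IsDerivMod f g 2 N)
    (x₀ : ℤ_[2]) (m : ℕ) (hm : N ≤ m) (i : ℕ) :
    delta (m+1) (f^[i + 2^m] x₀ - f^[i] x₀)
      = delta (m+1) (f^[2^m] x₀ - x₀) + ∑ j ∈ range i, delta 1 (g (f^[j] x₀)) := by
  induction i with
  | zero => simp
  | succ i ih =>
    rw [sum_range_succ, ← add_assoc, ← ih]
    apply LR_step hg m hm (f^[i] x₀) _ _ _
      (LR_dvd1 hf hft x₀ m i) (LR_dvd2 hf hft x₀ m i)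
      (LR_dvd1 hf hft x₀ m (i+1)) (LR_dvd2 hf hft x₀ m (i+1))
    have h1 : f^[i] x₀ + (f^[i + 2^m] x₀ - f^[i] x₀) = f^[i + 2^m] x₀ := by ring
    rw [h1, show (i+1) + 2^m = (i + 2^m) + 1 by omega, iterate_succ_apply',
      iterate_succ_apply']

lemma LR_hD (hf : OneLip f) (hft : TransitiveT f) (x₀ : ℤ_[2]) (m i : ℕ) :
    delta (m+1) (f^[i + 2^m] x₀)
      = delta (m+1) (f^[i] x₀) + delta m (f^[i] x₀)
        + delta (m+1) (f^[i + 2^m] x₀ - f^[i] x₀) := by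
  obtain ⟨a, ha, hrep, hda⟩ := LR_rep m _ (LR_dvd1 hf hft x₀ m i) (LR_dvd2 hf hft x₀ m i)
  have := (LR_delta_add m (f^[i] x₀) (f^[i + 2^m] x₀ - f^[i] x₀) a ha hrep).2
  rw [show f^[i] x₀ + (f^[i + 2^m] x₀ - f^[i] x₀) = f^[i + 2^m] x₀ by ring] at this
  rw [this, hda]

lemma LR_alpha_per (hf : OneLip f) (hft : TransitiveT f) (x₀ : ℤ_[2]) (i : ℕ) :
    delta (N+1) (f^[(i + 2^N) + 2^N] x₀ - f^[i + 2^N] x₀)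
      = delta (N+1) (f^[i + 2^N] x₀ - f^[i] x₀) := by
  obtain ⟨a, ha, hrep, hda⟩ := LR_rep N _ (LR_dvd1 hf hft x₀ N i) (LR_dvd2 hf hft x₀ N i)
  obtain ⟨a', ha', hrep', hda'⟩ :=
    LR_rep N _ (LR_dvd1 hf hft x₀ N (i + 2^N)) (LR_dvd2 hf hft x₀ N (i + 2^N))
  have hidx : (i + 2^N) + 2^N = i + 2^(N+1) := by rw [pow_succ]; omega
  have hD2 := LR_dvd2 hf hft x₀ (N+1) i
  have key : a = a' := by
    by_contra hne
    apply hD2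
    have haa : (2^N + a * 2^(N+1)) + (2^N + a' * 2^(N+1)) = 2^(N+2) := by
      have h1 : (2:ℕ)^(N+1) = 2^N * 2 := by ring
      have h2 : (2:ℕ)^(N+2) = 2^N * 4 := by ring
      have h3 : (0:ℕ) < 2^N := Nat.pow_pos (by norm_num)
      interval_cases a <;> interval_cases a' <;> omega
    have hsplit : f^[i + 2^(N+1)] x₀ - f^[i] x₀ =
        ((f^[i + 2^N] x₀ - f^[i] x₀) - ((2^N + a * 2^(N+1) : ℕ) : ℤ_[2]))
        + ((f^[(i + 2^N) + 2^N] x₀ - f^[i + 2^N] x₀) - ((2^N + a' * 2^(N+1) : ℕ) : ℤ_[2]))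
        + (((2^N + a * 2^(N+1) : ℕ) : ℤ_[2]) + ((2^N + a' * 2^(N+1) : ℕ) : ℤ_[2])) := by
      rw [hidx]; ring
    rw [show (N+1)+1 = N+2 from rfl, hsplit]
    refine dvd_add (dvd_add hrep hrep') ?_
    have : ((2^N + a * 2^(N+1) : ℕ) : ℤ_[2]) + ((2^N + a' * 2^(N+1) : ℕ) : ℤ_[2])
        = ((2^(N+2) : ℕ) : ℤ_[2]) := by
      rw [← Nat.cast_add, haa]
    rw [this]
    push_cast
    exact dvd_refl _
  rw [hda, hda', key]

end Main

/-- Linear relation between adjacent coordinate sequences of a transitive T-function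
uniformly differentiable modulo 4. -/
theorem linear_relation (f g : ℤ_[2] → ℤ_[2]) (N : ℕ)
    (hf : OneLip f) (hft : TransitiveT f) (hg : IsDerivMod f g 2 N) (x₀ : ℤ_[2]) :
    ∃ y : ℕ → ZMod 2, (∀ i : ℕ, y (i + 2 ^ N) = y i) ∧
      ∀ n : ℕ, N + 1 ≤ n → ∀ i : ℕ,
        delta n (f^[i + 2 ^ (n - 1)] x₀) =
          delta (n - 1) (f^[i] x₀) + delta n (f^[i] x₀) +
            delta (n - 1) x₀ + delta n x₀ + delta n (f^[2 ^ (n - 1)] x₀) + y i := by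
  refine ⟨fun i => ∑ j ∈ range i, delta 1 (g (f^[j] x₀)), ?_, ?_⟩
  · intro i
    have e1 := LR_hsum hf hft hg x₀ N le_rfl (i + 2^N)
    have e2 := LR_hsum hf hft hg x₀ N le_rfl i
    have halpha := LR_alpha_per (N := N) hf hft x₀ i
    -- e1 LHS needs index massage: (i + 2^N) + 2^N
    rw [halpha, e2] at e1
    exact (add_left_cancel e1).symm
  · intro n hn i
    obtain ⟨m, rfl⟩ : ∃ m, n = m + 1 := ⟨n - 1, by omega⟩
    have hm : N ≤ m := by omega
    simp only [Nat.add_sub_cancel]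
    have hD := LR_hD hf hft x₀ m i
    have hS := LR_hsum hf hft hg x₀ m hm i
    have hD0 : delta (m+1) (f^[2^m] x₀)
        = delta (m+1) x₀ + delta m x₀ + delta (m+1) (f^[2^m] x₀ - x₀) := by
      have := LR_hD hf hft x₀ m 0
      simpa using this
    rw [hD, hS, hD0]
    have zlem : ∀ p q r s C Y : ZMod 2,
        p + q + (C + Y) = q + p + r + s + (s + r + C) + Y := by decide
    exact zlem _ _ _ _ _ _
end

section
/- Let f : ℤ₂ → ℤ₂ be a 1-Lipschitz transitive map and let g : ℤ₂ → ℤ₂ be a derivative of f modulo 4 with parameter K. Then for every z ∈ ℤ₂ one has ∏_{j=0}^{2^K−1} g(f^[j](z)) ≡ 1 (mod 4), i.e. ‖(∏_{j=0}^{2^K−1} g(f^[j](z))) − 1‖ ≤ 2^(−2). -/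
open Function Finset

section Aux

open PadicInt

lemma congMod_iff_toZModPow (n : ℕ) (a b : ℤ_[2]) :
    CongMod n a b ↔ toZModPow n a = toZModPow n b := by
  unfold CongMod
  have h := PadicInt.norm_le_pow_iff_mem_span_pow (a - b) n
  rw [← ker_toZModPow, RingHom.mem_ker, map_sub, sub_eq_zero] at h
  rw [← h, zpow_neg, zpow_natCast]
  norm_num

lemma toZModPow_lift (n : ℕ) (y : ZMod (2^n)) : toZModPow n ((y.val : ℤ_[2])) = y := by
  haveI : NeZero (2^n) := ⟨pow_ne_zero n two_ne_zero⟩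
  rw [map_natCast]
  exact ZMod.natCast_rightInverse y

/-- The map induced by a 1-Lipschitz map on residues mod `2^n`. -/
noncomputable def psi (f : ℤ_[2] → ℤ_[2]) (n : ℕ) : ZMod (2^n) → ZMod (2^n) :=
  fun y => toZModPow n (f ((y.val : ℤ_[2])))

lemma psi_spec (f : ℤ_[2] → ℤ_[2]) (hf : OneLip f) (n : ℕ) (a : ℤ_[2]) :
    toZModPow n (f a) = psi f n (toZModPow n a) := by
  unfold psi
  rw [← congMod_iff_toZModPow]
  have h1 : CongMod n a (((toZModPow n a).val : ℤ_[2])) := by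
    rw [congMod_iff_toZModPow, toZModPow_lift]
  unfold CongMod at h1 ⊢
  exact (hf _ _).trans h1

lemma psi_iter_spec (f : ℤ_[2] → ℤ_[2]) (hf : OneLip f) (n : ℕ) (i : ℕ) (a : ℤ_[2]) :
    toZModPow n (f^[i] a) = (psi f n)^[i] (toZModPow n a) := by
  induction i with
  | zero => simp
  | succ i ih =>
    rw [iterate_succ_apply', iterate_succ_apply', psi_spec f hf, ih]

lemma orbit_inj (f : ℤ_[2] → ℤ_[2]) (hf : OneLip f) (n : ℕ) (hn : TransMod f n) (x : ℤ_[2]) :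
    Function.Injective (fun i : Fin (2^n) => (psi f n)^[(i : ℕ)] (toZModPow n x)) := by
  haveI : NeZero (2^n) := ⟨pow_ne_zero n two_ne_zero⟩
  have hsurj : Function.Surjective
      (fun i : Fin (2^n) => (psi f n)^[(i : ℕ)] (toZModPow n x)) := by
    intro y
    obtain ⟨i, hi, hcong⟩ := hn x ((y.val : ℤ_[2]))
    refine ⟨⟨i, hi⟩, ?_⟩
    have := (congMod_iff_toZModPow n _ _).mp hcong
    rw [toZModPow_lift] at this
    rw [← this, psi_iter_spec f hf]
  have hcard : Fintype.card (Fin (2^n)) = Fintype.card (ZMod (2^n)) := by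
    simp [ZMod.card]
  exact ((Fintype.bijective_iff_surjective_and_card _).mpr ⟨hsurj, hcard⟩).injective

lemma psi_bijective (f : ℤ_[2] → ℤ_[2]) (hf : OneLip f) (n : ℕ) (hn : TransMod f n) :
    Function.Bijective (psi f n) := by
  haveI : NeZero (2^n) := ⟨pow_ne_zero n two_ne_zero⟩
  rw [Fintype.bijective_iff_surjective_and_card]
  refine ⟨?_, rfl⟩
  intro y
  obtain ⟨i, hi, hcong⟩ := hn (f ((y.val : ℤ_[2]))) ((y.val : ℤ_[2]))
  have := (congMod_iff_toZModPow n _ _).mp hcong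
  rw [toZModPow_lift] at this
  refine ⟨(psi f n)^[i] (toZModPow n ((y.val : ℤ_[2]))), ?_⟩
  calc psi f n ((psi f n)^[i] (toZModPow n ((y.val : ℤ_[2]))))
      = (psi f n)^[i+1] (toZModPow n ((y.val : ℤ_[2]))) :=
        (Function.iterate_succ_apply' _ _ _).symm
    _ = toZModPow n (f^[i+1] ((y.val : ℤ_[2]))) := (psi_iter_spec f hf n (i+1) _).symm
    _ = y := by rw [Function.iterate_succ_apply]; exact this

/-- Lemma A: `f^[2^n] x ≡ x (mod 2^n)` for a transitive 1-Lipschitz map. -/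
lemma iter_pow_cong (f : ℤ_[2] → ℤ_[2]) (hf : OneLip f) (n : ℕ) (hn : TransMod f n)
    (x : ℤ_[2]) : CongMod n (f^[2^n] x) x := by
  rw [congMod_iff_toZModPow, psi_iter_spec f hf]
  set ψ := psi f n
  set x' := toZModPow n x
  -- find j < 2^n with ψ^[j] x' = ψ^[2^n] x'
  have hinj := orbit_inj f hf n hn x
  have hsurj : Function.Surjective
      (fun i : Fin (2^n) => ψ^[(i : ℕ)] x') := by
    haveI : NeZero (2^n) := ⟨pow_ne_zero n two_ne_zero⟩
    have hcard : Fintype.card (Fin (2^n)) = Fintype.card (ZMod (2^n)) := by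
      simp [ZMod.card]
    exact ((Fintype.bijective_iff_injective_and_card _).mpr ⟨hinj, hcard⟩).surjective
  obtain ⟨j, hj⟩ := hsurj (ψ^[2^n] x')
  have hj' : ψ^[(j : ℕ)] x' = ψ^[2^n] x' := hj
  rcases Nat.eq_zero_or_pos (j : ℕ) with h0 | hpos
  · rw [← hj', h0, iterate_zero_apply]
  · exfalso
    have hjlt : (j : ℕ) < 2^n := j.2
    have hψinj := psi_bijective f hf n hn |>.injective
    have hcancel : ψ^[2^n - (j : ℕ)] x' = x' := by
      have hiter : ψ^[(j:ℕ)] (ψ^[2^n - (j:ℕ)] x') = ψ^[(j:ℕ)] x' := by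
        rw [← Function.iterate_add_apply, Nat.add_sub_cancel' hjlt.le, hj']
      exact Function.Injective.iterate hψinj (j : ℕ) hiter
    have h1 : (⟨2^n - (j:ℕ), by omega⟩ : Fin (2^n)) = ⟨0, Nat.two_pow_pos n⟩ :=
      hinj (show ψ^[2^n - (j:ℕ)] x' = ψ^[0] x' by simpa using hcancel)
    have h2 : 2^n - (j:ℕ) = 0 := congrArg Fin.val h1
    omega

/-- Lemma B: `f^[2^n] x ≢ x (mod 2^(n+1))` when `f` is transitive mod `2^(n+1)`. -/
lemma iter_pow_ncong (f : ℤ_[2] → ℤ_[2]) (hf : OneLip f) (n : ℕ) (hn : TransMod f (n+1))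
    (x : ℤ_[2]) : ¬ CongMod (n+1) (f^[2^n] x) x := by
  intro hc
  rw [congMod_iff_toZModPow, psi_iter_spec f hf] at hc
  have hinj := orbit_inj f hf (n+1) hn x
  have h1 : (⟨2^n, by have : (2:ℕ)^n < 2^(n+1) := Nat.pow_lt_pow_succ (by norm_num); omega⟩ :
      Fin (2^(n+1))) = ⟨0, Nat.two_pow_pos _⟩ :=
    hinj (show (psi f (n+1))^[2^n] (PadicInt.toZModPow (n+1) x)
            = (psi f (n+1))^[0] (PadicInt.toZModPow (n+1) x) by simpa using hc)
  have h2 : (2:ℕ)^n = 0 := congrArg Fin.val h1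
  exact pow_ne_zero n two_ne_zero h2

/-- Iterates of a 1-Lipschitz map are 1-Lipschitz. -/
lemma oneLip_iterate (f : ℤ_[2] → ℤ_[2]) (hf : OneLip f) (m : ℕ) (a b : ℤ_[2]) :
    ‖f^[m] a - f^[m] b‖ ≤ ‖a - b‖ := by
  induction m with
  | zero => simp
  | succ m ih =>
    rw [iterate_succ_apply', iterate_succ_apply']
    exact (hf _ _).trans ih

/-- Chain rule estimate: iterating the derivative bound. -/
lemma chain_rule (f g : ℤ_[2] → ℤ_[2]) (K : ℕ) (hf : OneLip f) (hg : IsDerivMod f g 2 K)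
    (x h : ℤ_[2]) (hh : ‖h‖ ≤ ((2:ℝ)^K)⁻¹) (m : ℕ) :
    ‖f^[m] (x + h) - f^[m] x - (∏ j ∈ Finset.range m, g (f^[j] x)) * h‖
      ≤ ((2:ℝ)^(2:ℕ))⁻¹ * ‖h‖ := by
  induction m with
  | zero =>
    simp only [iterate_zero_apply, Finset.range_zero, Finset.prod_empty, one_mul,
      add_sub_cancel_left, sub_self, norm_zero]
    positivity
  | succ m ih =>
    set y := f^[m] x with hy
    set e := f^[m] (x + h) - f^[m] x with he
    have hem : ‖e‖ ≤ ‖h‖ := by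
      have := oneLip_iterate f hf m (x + h) x
      simpa using this
    have h1 : ‖f (y + e) - f y - g y * e‖ ≤ ((2:ℝ)^(2:ℕ))⁻¹ * ‖e‖ := hg y e (hem.trans hh)
    have key : f^[m+1] (x+h) - f^[m+1] x - (∏ j ∈ Finset.range (m+1), g (f^[j] x)) * h
        = (f (y + e) - f y - g y * e)
          + g y * (e - (∏ j ∈ Finset.range m, g (f^[j] x)) * h) := by
      rw [Finset.prod_range_succ, iterate_succ_apply', iterate_succ_apply']
      have hfe : f^[m] (x+h) = y + e := by rw [he, hy]; ring
      rw [hfe, ← hy]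
      ring
    rw [key]
    refine (PadicInt.nonarchimedean _ _).trans (max_le ?_ ?_)
    · exact h1.trans (by nlinarith [norm_nonneg h, norm_nonneg e])
    · calc ‖g y * (e - (∏ j ∈ Finset.range m, g (f^[j] x)) * h)‖
          = ‖g y‖ * ‖e - (∏ j ∈ Finset.range m, g (f^[j] x)) * h‖ := norm_mul _ _
        _ ≤ 1 * (((2:ℝ)^(2:ℕ))⁻¹ * ‖h‖) :=
            mul_le_mul (PadicInt.norm_le_one _) ih (norm_nonneg _) zero_le_one
        _ = ((2:ℝ)^(2:ℕ))⁻¹ * ‖h‖ := one_mul _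

end Aux

/-- For a transitive T-function uniformly differentiable modulo 4, the product of the
derivative modulo 4 over a cycle of length `2^K` is 1 modulo 4. -/
theorem prod_deriv_congr_one (f g : ℤ_[2] → ℤ_[2]) (K : ℕ)
    (hf : OneLip f) (hft : TransitiveT f) (hg : IsDerivMod f g 2 K) (z : ℤ_[2]) :
    ‖(∏ j ∈ Finset.range (2 ^ K), g (f^[j] z)) - 1‖ ≤ ((2 : ℝ) ^ (2 : ℕ))⁻¹ := by
  set P := ∏ j ∈ Finset.range (2 ^ K), g (f^[j] z) with hP
  set F := f^[2^K] with hF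
  set h₀ := F z - z with hh₀
  set h₁ := F (F z) - F z with hh₁
  -- ‖h₀‖ ≤ 2^{-K}
  have ha1 : ‖h₀‖ ≤ ((2:ℝ)^K)⁻¹ := by
    rcases Nat.eq_zero_or_pos K with h0 | hKpos
    · subst h0
      simpa using PadicInt.norm_le_one h₀
    · exact iter_pow_cong f hf K (hft K hKpos) z
  -- chain rule at z with increment h₀
  have hchain : ‖F (F z) - F z - P * h₀‖ ≤ ((2:ℝ)^(2:ℕ))⁻¹ * ‖h₀‖ := by
    have h2 := chain_rule f g K hf hg z h₀ ha1 (2^K)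
    have hz : z + h₀ = F z := by show z + (F z - z) = F z; ring
    rw [hz] at h2
    exact h2
  have hbound : ((2:ℝ)^(2:ℕ))⁻¹ * ‖h₀‖ ≤ ((2:ℝ)^(K+2))⁻¹ := by
    rw [pow_add, mul_inv, mul_comm]
    gcongr
  have hest : ‖h₁ - P * h₀‖ ≤ ((2:ℝ)^(K+2))⁻¹ := hchain.trans hbound
  -- h₁ is not ≡ 0 mod 2^{K+1}
  have hB1 : ¬ ‖h₁‖ ≤ ((2:ℝ)^(K+1))⁻¹ := by
    have hB := iter_pow_ncong f hf K (hft (K+1) (by omega)) (F z)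
    exact fun hcon => hB hcon
  -- F² z ≢ z mod 2^{K+2}
  have hB2 : ¬ ‖F (F z) - z‖ ≤ ((2:ℝ)^(K+2))⁻¹ := by
    have := iter_pow_ncong f hf (K+1) (hft (K+2) (by omega)) z
    have hFF : f^[2^(K+1)] z = F (F z) := by
      show f^[2^(K+1)] z = f^[2^K] (f^[2^K] z)
      rw [← Function.iterate_add_apply]
      congr 1
      rw [pow_succ]; ring
    rw [hFF] at this
    exact fun hcon => this hcon
  -- numeric facts
  have hp1 : ((2:ℝ)^(K+2))⁻¹ < ((2:ℝ)^(K+1))⁻¹ := by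
    gcongr
    · norm_num
    · omega
  -- P is odd: toZModPow 1 P ≠ 0
  have hodd : PadicInt.toZModPow 1 P ≠ 0 := by
    intro h0
    have hP2 : ‖P‖ ≤ ((2:ℝ)^(1:ℕ))⁻¹ := by
      have := (congMod_iff_toZModPow 1 P 0).mpr (by simpa using h0)
      simpa [CongMod] using this
    have hPh : ‖P * h₀‖ ≤ ((2:ℝ)^(K+1))⁻¹ := by
      rw [norm_mul]
      calc ‖P‖ * ‖h₀‖ ≤ ((2:ℝ)^(1:ℕ))⁻¹ * ((2:ℝ)^K)⁻¹ :=
            mul_le_mul hP2 ha1 (norm_nonneg _) (by positivity)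
        _ = ((2:ℝ)^(K+1))⁻¹ := by rw [pow_add, mul_inv, mul_comm]
    apply hB1
    have : h₁ = (h₁ - P * h₀) + P * h₀ := by ring
    rw [this]
    refine (PadicInt.nonarchimedean _ _).trans (max_le ?_ hPh)
    exact hest.trans hp1.le
  -- case analysis on P mod 4
  set t := PadicInt.toZModPow 2 P with ht
  have ht3 : t ≠ 3 := by
    intro h3
    apply hB2
    have hP1 : ‖P + 1‖ ≤ ((2:ℝ)^(2:ℕ))⁻¹ := by
      have : PadicInt.toZModPow 2 (P + 1) = 0 := by
        rw [map_add, map_one, ← ht, h3]; decide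
      have hc := (congMod_iff_toZModPow 2 (P+1) 0).mpr (by simpa using this)
      simpa [CongMod] using hc
    have hsum : F (F z) - z = (h₁ - P * h₀) + (P + 1) * h₀ := by
      rw [hh₁, hh₀]; ring
    rw [hsum]
    refine (PadicInt.nonarchimedean _ _).trans (max_le hest ?_)
    rw [norm_mul]
    calc ‖P + 1‖ * ‖h₀‖ ≤ ((2:ℝ)^(2:ℕ))⁻¹ * ((2:ℝ)^K)⁻¹ :=
          mul_le_mul hP1 ha1 (norm_nonneg _) (by positivity)
      _ = ((2:ℝ)^(K+2))⁻¹ := by rw [pow_add, mul_inv, mul_comm]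
  have htcast : (ZMod.castHom (pow_dvd_pow 2 (by norm_num : 1 ≤ 2)) (ZMod (2^1)))
      (PadicInt.toZModPow 2 P) = PadicInt.toZModPow 1 P := by
    rw [← PadicInt.zmod_cast_comp_toZModPow 1 2 (by norm_num)]
    rfl
  have ht0 : t ≠ 0 := by
    intro h0
    apply hodd
    rw [← htcast, ← ht, h0]
    decide
  have ht2 : t ≠ 2 := by
    intro h2
    apply hodd
    rw [← htcast, ← ht, h2]
    decide
  have ht1 : t = 1 := by
    have hall : ∀ u : ZMod (2^2), u ≠ 0 → u ≠ 2 → u ≠ 3 → u = 1 := by decide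
    exact hall t ht0 ht2 ht3
  -- conclude
  have : PadicInt.toZModPow 2 (P - 1) = 0 := by
    rw [map_sub, map_one, ← ht, ht1]; decide
  have hc := (congMod_iff_toZModPow 2 (P-1) 0).mpr (by simpa using this)
  simpa [CongMod] using hc
end

section
/- Let f : ℤ₂ → ℤ₂ be a 1-Lipschitz map and let g : ℤ₂ → ℤ₂ be a derivative of f modulo 2^M with parameter K. Then g is periodic modulo 2^K with values determined modulo 2^M: for all x, y ∈ ℤ₂, if x ≡ y (mod 2^K) then g(x) ≡ g(y) (mod 2^M), i.e. ‖g(x) − g(y)‖ ≤ 2^(−M). -/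
open Function Finset

/-- A derivative modulo `2^M` with parameter `K` is periodic modulo `2^K`
with values determined modulo `2^M`. -/
theorem deriv_mod_periodic (f g : ℤ_[2] → ℤ_[2]) (M K : ℕ)
    (hf : OneLip f) (hg : IsDerivMod f g M K) :
    ∀ x y : ℤ_[2], CongMod K x y → ‖g x - g y‖ ≤ ((2 : ℝ) ^ M)⁻¹ := by
  intro x y hxy
  set t : ℤ_[2] := (2 : ℤ_[2]) ^ K with ht
  have hnorm : ‖t‖ = ((2 : ℝ) ^ K)⁻¹ := by
    have := PadicInt.norm_p_pow (p := 2) K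
    rw [ht]
    push_cast at this
    rw [this, zpow_neg, zpow_natCast]
  have nsub : ∀ a b : ℤ_[2], ‖a - b‖ ≤ max ‖a‖ ‖b‖ := fun a b => by
    rw [sub_eq_add_neg]
    exact le_trans (PadicInt.nonarchimedean _ _) (by rw [norm_neg])
  have hyx : ‖y - x‖ ≤ ((2 : ℝ) ^ K)⁻¹ := by
    rw [norm_sub_rev]; exact hxy
  have hyxt : ‖y - x + t‖ ≤ ((2 : ℝ) ^ K)⁻¹ :=
    le_trans (PadicInt.nonarchimedean _ _) (max_le hyx hnorm.le)
  have h1 := hg y t hnorm.le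
  have h2 := hg x (y - x) hyx
  have h3 := hg x (y - x + t) hyxt
  rw [show x + (y - x) = y by ring] at h2
  rw [show x + (y - x + t) = y + t by ring] at h3
  have key : (g y - g x) * t =
      (f (y + t) - f x - g x * (y - x + t)) - (f y - f x - g x * (y - x))
        - (f (y + t) - f y - g y * t) := by ring
  have hM : (0 : ℝ) ≤ ((2 : ℝ) ^ M)⁻¹ := by positivity
  have b3 : ‖f (y + t) - f x - g x * (y - x + t)‖ ≤ ((2 : ℝ) ^ M)⁻¹ * ((2 : ℝ) ^ K)⁻¹ :=
    le_trans h3 (mul_le_mul_of_nonneg_left hyxt hM)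
  have b2 : ‖f y - f x - g x * (y - x)‖ ≤ ((2 : ℝ) ^ M)⁻¹ * ((2 : ℝ) ^ K)⁻¹ :=
    le_trans h2 (mul_le_mul_of_nonneg_left hyx hM)
  have b1 : ‖f (y + t) - f y - g y * t‖ ≤ ((2 : ℝ) ^ M)⁻¹ * ((2 : ℝ) ^ K)⁻¹ := by
    rw [hnorm] at h1; exact h1
  have hb : ‖(g y - g x) * t‖ ≤ ((2 : ℝ) ^ M)⁻¹ * ((2 : ℝ) ^ K)⁻¹ := by
    rw [key]
    exact le_trans (nsub _ _)
      (max_le (le_trans (nsub _ _) (max_le b3 b2)) b1)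
  rw [norm_mul, hnorm] at hb
  have hKpos : (0 : ℝ) < ((2 : ℝ) ^ K)⁻¹ := by positivity
  have := le_of_mul_le_mul_right hb hKpos
  rwa [norm_sub_rev]
end

section
/- Let f : ℤ₂ → ℤ₂ be a 1-Lipschitz bijective map. Then f is uniformly differentiable modulo 2 with derivative identically 1: there exists K ∈ ℕ such that for all x, h ∈ ℤ₂ with ‖h‖ ≤ 2^(−K) one has ‖f(x+h) − f(x) − h‖ ≤ 2^(−1)·‖h‖. -/
open Function Finset

lemma toZMod_eq_one {w : ℤ_[2]} (hw : ‖w‖ = 1) : PadicInt.toZMod w = 1 := by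
  have h0 : PadicInt.toZMod w ≠ 0 := by
    intro h
    have : w ∈ RingHom.ker (PadicInt.toZMod : ℤ_[2] →+* ZMod 2) := h
    rw [PadicInt.ker_toZMod, PadicInt.maximalIdeal_eq_span_p, Ideal.mem_span_singleton,
      ← PadicInt.norm_lt_one_iff_dvd] at this
    rw [hw] at this; exact lt_irrefl 1 this
  have : ∀ z : ZMod 2, z ≠ 0 → z = 1 := by decide
  exact this _ h0

lemma units_sub {u v : ℤ_[2]} (hu : ‖u‖ = 1) (hv : ‖v‖ = 1) : ‖u - v‖ ≤ 2⁻¹ := by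
  have hdvd : (2 : ℤ_[2]) ∣ u - v := by
    have hker : u - v ∈ RingHom.ker (PadicInt.toZMod : ℤ_[2] →+* ZMod 2) := by
      simp [RingHom.mem_ker, map_sub, toZMod_eq_one hu, toZMod_eq_one hv]
    rwa [PadicInt.ker_toZMod, PadicInt.maximalIdeal_eq_span_p, Ideal.mem_span_singleton] at hker
  have : ‖u - v‖ < 1 := (PadicInt.norm_lt_one_iff_dvd _).2 hdvd
  have := (PadicInt.norm_lt_pow_iff_norm_le_pow_sub_one (u - v) 0).1 (by simpa using this)
  simpa using this

lemma dvd_of_norm_le {z : ℤ_[2]} {k : ℕ} (hz : ‖z‖ ≤ ((2 : ℝ) ^ k)⁻¹) :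
    (2 : ℤ_[2]) ^ k ∣ z := by
  have := (PadicInt.norm_le_pow_iff_mem_span_pow z k).1 (by
    rw [zpow_neg, zpow_natCast]; exact_mod_cast hz)
  rwa [Ideal.mem_span_singleton] at this

/-- A bijective T-function is uniformly differentiable modulo 2 with derivative 1. -/
theorem bijective_unif_diff_mod_two (f : ℤ_[2] → ℤ_[2])
    (hf : OneLip f) (hbij : BijectiveT f) :
    ∃ K : ℕ, ∀ x h : ℤ_[2], ‖h‖ ≤ ((2 : ℝ) ^ K)⁻¹ →
      ‖f (x + h) - f x - h‖ ≤ ((2 : ℝ) ^ (1 : ℕ))⁻¹ * ‖h‖ := by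
  use 0
  intro x h hh
  by_cases hne : h = 0
  · simp [hne]
  set k : ℕ := h.valuation with hk
  have hval : (k : ℤ) = h.valuation := rfl
  have hnorm : ‖h‖ = ((2 : ℝ) ^ k)⁻¹ := by
    rw [PadicInt.norm_eq_zpow_neg_valuation hne, ← hval]
    push_cast
    rw [zpow_neg, zpow_natCast]
  have h2k : ‖(2 : ℤ_[2]) ^ k‖ = ((2 : ℝ) ^ k)⁻¹ := by
    have := PadicInt.norm_p_pow (p := 2) k
    rw [zpow_neg, zpow_natCast] at this
    simpa using this
  have hpkne : ((2 : ℝ) ^ k)⁻¹ ≠ 0 := by positivity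
  -- factor h
  obtain ⟨b, hb⟩ := dvd_of_norm_le hnorm.le
  have hbnorm : ‖b‖ = 1 := by
    have : ‖h‖ = ((2 : ℝ) ^ k)⁻¹ * ‖b‖ := by rw [hb, norm_mul, h2k]
    rw [hnorm] at this
    field_simp at this
    linarith
  -- the increment d
  set d : ℤ_[2] := f (x + 2 ^ k) - f x with hd
  have hd_le : ‖d‖ ≤ ((2 : ℝ) ^ k)⁻¹ := by
    have := hf (x + 2 ^ k) x
    simpa [hd, h2k] using this
  have hd_not : ¬ ‖d‖ ≤ ((2 : ℝ) ^ (k + 1))⁻¹ := by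
    intro hc
    have := (hbij (k + 1) (by omega)).1 (x + 2 ^ k) x hc
    unfold CongMod at this
    rw [add_sub_cancel_left, h2k] at this
    have h1 : ((2 : ℝ) ^ (k + 1))⁻¹ < ((2 : ℝ) ^ k)⁻¹ := by
      apply inv_strictAnti₀ (by positivity)
      exact pow_lt_pow_right₀ (by norm_num) (by omega)
    linarith
  have hd_eq : ‖d‖ = ((2 : ℝ) ^ k)⁻¹ := by
    refine le_antisymm hd_le (not_lt.1 fun hlt => hd_not ?_)
    have := (PadicInt.norm_le_pow_iff_norm_lt_pow_add_one d (-(k + 1) : ℤ)).2 (by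
      push_cast
      rw [show (-(k + 1) + 1 : ℤ) = -(k : ℤ) by ring, zpow_neg, zpow_natCast]
      exact hlt)
    rw [show (-(k + 1) : ℤ) = -((k + 1 : ℕ) : ℤ) by push_cast; ring, zpow_neg, zpow_natCast] at this
    exact_mod_cast this
  obtain ⟨a, ha⟩ := dvd_of_norm_le hd_eq.le
  have hanorm : ‖a‖ = 1 := by
    have : ‖d‖ = ((2 : ℝ) ^ k)⁻¹ * ‖a‖ := by rw [ha, norm_mul, h2k]
    rw [hd_eq] at this
    field_simp at this
    linarith
  -- two small terms
  have t1 : ‖f (x + h) - f (x + 2 ^ k)‖ ≤ ((2 : ℝ) ^ k)⁻¹ * 2⁻¹ := by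
    have hle := hf (x + h) (x + 2 ^ k)
    have : (x + h) - (x + 2 ^ k) = 2 ^ k * (b - 1) := by rw [hb]; ring
    rw [this, norm_mul, h2k] at hle
    exact hle.trans (by
      have := units_sub hbnorm (norm_one (α := ℤ_[2]))
      have h0 : (0:ℝ) ≤ ((2 : ℝ) ^ k)⁻¹ := by positivity
      exact mul_le_mul_of_nonneg_left this h0)
  have t2 : ‖d - h‖ ≤ ((2 : ℝ) ^ k)⁻¹ * 2⁻¹ := by
    have : d - h = 2 ^ k * (a - b) := by rw [ha, hb]; ring
    rw [this, norm_mul, h2k]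
    have := units_sub hanorm hbnorm
    have h0 : (0:ℝ) ≤ ((2 : ℝ) ^ k)⁻¹ := by positivity
    exact mul_le_mul_of_nonneg_left this h0
  have key : f (x + h) - f x - h = (f (x + h) - f (x + 2 ^ k)) + (d - h) := by
    rw [hd]; ring
  rw [key, hnorm]
  calc ‖(f (x + h) - f (x + 2 ^ k)) + (d - h)‖
      ≤ max ‖f (x + h) - f (x + 2 ^ k)‖ ‖d - h‖ := PadicInt.nonarchimedean _ _
    _ ≤ ((2 : ℝ) ^ k)⁻¹ * 2⁻¹ := max_le t1 t2
    _ = ((2 : ℝ) ^ (1 : ℕ))⁻¹ * ((2 : ℝ) ^ k)⁻¹ := by ring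
end

section
/- Let f : ℤ₂ → ℤ₂ be a 1-Lipschitz map and let g : ℤ₂ → ℤ₂ be a derivative of f modulo 2 with parameter K. Then the following are equivalent: (i) f is bijective; (ii) f is bijective modulo 2^K and g(x) ≡ 1 (mod 2) for all x ∈ ℤ₂ (i.e. ‖g(x) − 1‖ ≤ 2^(−1)); (iii) f is bijective modulo 2^(K+1). -/
open Function Finset

noncomputable def pi2 (n : ℕ) : ℤ_[2] →+* ZMod (2 ^ n) := PadicInt.toZModPow n

lemma congMod_iff_pi (n : ℕ) (a b : ℤ_[2]) : CongMod n a b ↔ pi2 n a = pi2 n b := by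
  have h1 : ((2 : ℝ) ^ n)⁻¹ = ((2:ℕ) : ℝ) ^ (-(n:ℤ)) := by
    rw [zpow_neg, zpow_natCast]; norm_num
  rw [CongMod, ← sub_eq_zero, ← map_sub, show pi2 n = PadicInt.toZModPow n from rfl,
    ← RingHom.mem_ker, PadicInt.ker_toZModPow, h1,
    PadicInt.norm_le_pow_iff_mem_span_pow]

noncomputable def sec2 (n : ℕ) (z : ZMod (2^n)) : ℤ_[2] := (z.val : ℤ_[2])

lemma pi2_sec2 (n : ℕ) (z : ZMod (2^n)) : pi2 n (sec2 n z) = z := by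
  rw [sec2, map_natCast, ZMod.natCast_zmod_val]

noncomputable def indF (f : ℤ_[2] → ℤ_[2]) (n : ℕ) (z : ZMod (2^n)) : ZMod (2^n) :=
  pi2 n (f (sec2 n z))

lemma congMod_of_lip {f : ℤ_[2] → ℤ_[2]} (hf : OneLip f) {n : ℕ} {a b : ℤ_[2]}
    (h : CongMod n a b) : CongMod n (f a) (f b) := le_trans (hf a b) h

lemma indF_compat {f : ℤ_[2] → ℤ_[2]} (hf : OneLip f) (n : ℕ) (x : ℤ_[2]) :
    pi2 n (f x) = indF f n (pi2 n x) := by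
  rw [indF]
  exact (congMod_iff_pi n _ _).mp (congMod_of_lip hf
    ((congMod_iff_pi n _ _).mpr (pi2_sec2 n (pi2 n x)).symm))

lemma bijMod_iff_indF {f : ℤ_[2] → ℤ_[2]} (hf : OneLip f) (n : ℕ) :
    BijMod f n ↔ Function.Bijective (indF f n) := by
  constructor
  · rintro ⟨hi, hs⟩
    constructor
    · intro z w h
      rw [indF, indF] at h
      have := hi _ _ ((congMod_iff_pi n _ _).mpr h)
      rw [congMod_iff_pi, pi2_sec2, pi2_sec2] at this
      exact this
    · intro w
      obtain ⟨x, hx⟩ := hs (sec2 n w)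
      refine ⟨pi2 n x, ?_⟩
      rw [← indF_compat hf, (congMod_iff_pi n _ _).mp hx, pi2_sec2]
  · rintro ⟨hi, hs⟩
    constructor
    · intro a b h
      rw [congMod_iff_pi, indF_compat hf, indF_compat hf] at h
      rw [congMod_iff_pi]
      exact hi h
    · intro y
      obtain ⟨z, hz⟩ := hs (pi2 n y)
      exact ⟨sec2 n z, by rw [congMod_iff_pi, indF_compat hf, pi2_sec2, hz]⟩

lemma bijMod_descend {f : ℤ_[2] → ℤ_[2]} (hf : OneLip f) {n : ℕ}
    (h : BijMod f (n+1)) : BijMod f n := by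
  rw [bijMod_iff_indF hf] at h ⊢
  set ρ : ZMod (2^(n+1)) →+* ZMod (2^n) := ZMod.castHom (pow_dvd_pow 2 (Nat.le_succ n)) _
  have hρπ : ∀ x : ℤ_[2], ρ (pi2 (n+1) x) = pi2 n x := by
    intro x
    have := PadicInt.zmod_cast_comp_toZModPow (p := 2) n (n+1) (Nat.le_succ n)
    exact congrFun (congrArg (fun g => g.toFun) this) x
  have hcomm : ∀ z, ρ (indF f (n+1) z) = indF f n (ρ z) := by
    intro z
    rw [indF, hρπ, indF_compat hf, ← hρπ, pi2_sec2]
  have hρsurj : Function.Surjective ρ := by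
    intro w
    exact ⟨(w.val : ZMod (2^(n+1))), by rw [map_natCast, ZMod.natCast_zmod_val]⟩
  have hsurj : Function.Surjective (indF f n) := by
    intro w
    obtain ⟨z, hz⟩ := hρsurj w
    obtain ⟨z', hz'⟩ := h.2 z
    exact ⟨ρ z', by rw [← hcomm, hz', hz]⟩
  exact ⟨Finite.injective_iff_surjective.mpr hsurj, hsurj⟩

lemma bijMod_mono {f : ℤ_[2] → ℤ_[2]} (hf : OneLip f) {n m : ℕ} (hmn : m ≤ n)
    (h : BijMod f n) : BijMod f m := by
  induction n with
  | zero => simpa [Nat.le_zero.mp hmn] using h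
  | succ k ih =>
    rcases Nat.lt_or_ge m (k+1) with hlt | hge
    · exact ih (Nat.lt_succ_iff.mp hlt) (bijMod_descend hf h)
    · simpa [le_antisymm hmn hge] using h

lemma norm_two_pow (n : ℕ) : ‖((2:ℤ_[2]))^n‖ = ((2 : ℝ) ^ n)⁻¹ := by
  have := PadicInt.norm_p_pow (p := 2) n
  push_cast at this
  rw [this, zpow_neg, zpow_natCast]

lemma ultra_eq {a b : ℤ_[2]} (h : ‖b‖ < ‖a‖) : ‖a + b‖ = ‖a‖ := by
  refine le_antisymm ((PadicInt.nonarchimedean a b).trans (by simp [h.le])) ?_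
  have h2 : ‖a‖ ≤ max ‖a + b‖ ‖-b‖ := by
    simpa using PadicInt.nonarchimedean (a + b) (-b)
  rcases max_cases ‖a + b‖ ‖-b‖ with ⟨he, _⟩ | ⟨he, _⟩
  · rwa [he] at h2
  · rw [he] at h2; simp at h2; linarith

lemma unit_norm {u : ℤ_[2]} (h : ‖u - 1‖ ≤ ((2 : ℝ) ^ (1:ℕ))⁻¹) : ‖u‖ = 1 := by
  have h1 : ‖(1:ℤ_[2])‖ = 1 := norm_one
  have h2 : ‖u - 1‖ < ‖(1:ℤ_[2])‖ := lt_of_le_of_lt h (by rw [h1]; norm_num)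
  have := ultra_eq (a := (1:ℤ_[2])) (b := u - 1) h2
  simpa using this

lemma two_dvd_of_norm_le {z : ℤ_[2]} {n : ℕ} (h : ‖z‖ ≤ ((2 : ℝ) ^ n)⁻¹) :
    ∃ c : ℤ_[2], z = (2:ℤ_[2])^n * c := by
  have h1 : ((2 : ℝ) ^ n)⁻¹ = ((2:ℕ) : ℝ) ^ (-(n:ℤ)) := by
    rw [zpow_neg, zpow_natCast]; norm_num
  rw [h1, PadicInt.norm_le_pow_iff_mem_span_pow, Ideal.mem_span_singleton] at h
  obtain ⟨c, hc⟩ := h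
  exact ⟨c, by rw [hc]; norm_num⟩

lemma zero_or_one (z : ℤ_[2]) : CongMod 1 z 0 ∨ CongMod 1 z 1 := by
  rw [congMod_iff_pi, congMod_iff_pi]
  have h2 : (pi2 1 z).val < 2^1 := ZMod.val_lt _
  have hcast : (((pi2 1 z).val : ℕ) : ZMod (2^1)) = pi2 1 z := ZMod.natCast_zmod_val _
  rcases (by omega : (pi2 1 z).val = 0 ∨ (pi2 1 z).val = 1) with h | h
  · left; rw [← hcast, h]; simp
  · right; rw [← hcast, h]; simp

lemma bijMod_step {f g : ℤ_[2] → ℤ_[2]} {K : ℕ} (hg : IsDerivMod f g 1 K)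
    (hgood : ∀ x, ‖g x - 1‖ ≤ ((2 : ℝ) ^ (1:ℕ))⁻¹) {n : ℕ} (hn : K ≤ n)
    (h : BijMod f n) : BijMod f (n+1) := by
  have hpos : (0:ℝ) < 2 ^ n := by positivity
  have hmono : ((2:ℝ)^(n+1))⁻¹ ≤ ((2:ℝ)^n)⁻¹ := by
    apply inv_anti₀ hpos
    apply pow_le_pow_right₀ (by norm_num) (Nat.le_succ n)
  have hKn : ((2:ℝ)^n)⁻¹ ≤ ((2:ℝ)^K)⁻¹ := by
    apply inv_anti₀ (by positivity)
    exact pow_le_pow_right₀ (by norm_num) hn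
  constructor
  · intro a b hab
    have hab' : CongMod n a b := h.1 a b (le_trans hab hmono)
    rcases eq_or_ne (b - a) 0 with h0 | h0
    · have hab2 : a = b := (sub_eq_zero.mp h0).symm
      show ‖a - b‖ ≤ ((2:ℝ)^(n+1))⁻¹
      rw [hab2, sub_self, norm_zero]
      positivity
    · have hnorm : ‖b - a‖ ≤ ((2:ℝ)^n)⁻¹ := by
        rw [norm_sub_rev]; exact hab'
      have hder := hg a (b - a) (le_trans hnorm hKn)
      have hu : ‖g a‖ = 1 := unit_norm (hgood a)
      have hga : ‖g a * (b - a)‖ = ‖b - a‖ := by rw [norm_mul, hu, one_mul]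
      have hhpos : (0:ℝ) < ‖b - a‖ := norm_pos_iff.mpr h0
      have hlt : ‖f (a + (b - a)) - f a - g a * (b - a)‖ < ‖g a * (b - a)‖ := by
        rw [hga]
        refine lt_of_le_of_lt hder ?_
        nlinarith
      have heq : ‖f (a + (b - a)) - f a‖ = ‖b - a‖ := by
        have h2 := ultra_eq hlt
        rw [hga] at h2
        have h3 : g a * (b - a) + (f (a + (b - a)) - f a - g a * (b - a))
            = f (a + (b - a)) - f a := by ring
        rwa [h3] at h2
      have hb : a + (b - a) = b := by ring
      rw [hb] at heq
      show ‖a - b‖ ≤ ((2:ℝ)^(n+1))⁻¹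
      rw [norm_sub_rev, ← heq, norm_sub_rev]
      exact hab
  · intro y
    obtain ⟨x, hx⟩ := h.2 y
    obtain ⟨c, hc⟩ := two_dvd_of_norm_le (n := n) (z := y - f x)
      (by rw [norm_sub_rev]; exact hx)
    have hu : IsUnit (g x) := PadicInt.isUnit_iff.mpr (unit_norm (hgood x))
    obtain ⟨u, hu⟩ := hu
    set hh : ℤ_[2] := (2:ℤ_[2])^n * (c * ↑u⁻¹) with hhd
    have hnh : ‖hh‖ ≤ ((2:ℝ)^n)⁻¹ := by
      rw [hhd, norm_mul, norm_two_pow]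
      have h6 : ‖c * (↑u⁻¹ : ℤ_[2])‖ ≤ 1 := PadicInt.norm_le_one _
      have h4 : (0:ℝ) ≤ ((2:ℝ)^n)⁻¹ := by positivity
      nlinarith [norm_nonneg (c * (↑u⁻¹ : ℤ_[2]))]
    have huu := u.mul_inv
    have hgh : g x * hh = y - f x := by
      rw [hhd, hc, ← hu]
      calc (↑u : ℤ_[2]) * ((2:ℤ_[2])^n * (c * ↑u⁻¹)) = (2:ℤ_[2])^n * c * (↑u * ↑u⁻¹) := by ring
        _ = (2:ℤ_[2])^n * c := by rw [huu, mul_one]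
    have hder := hg x hh (le_trans hnh hKn)
    refine ⟨x + hh, ?_⟩
    show ‖f (x + hh) - y‖ ≤ ((2:ℝ)^(n+1))⁻¹
    have h5 : f (x + hh) - y = f (x + hh) - f x - g x * hh := by rw [hgh]; ring
    rw [h5]
    refine le_trans hder ?_
    have h7 : ((2:ℝ)^(1:ℕ))⁻¹ * ((2:ℝ)^n)⁻¹ = ((2:ℝ)^(n+1))⁻¹ := by
      rw [← mul_inv, ← pow_add]; ring_nf
    calc ((2:ℝ)^(1:ℕ))⁻¹ * ‖hh‖ ≤ ((2:ℝ)^(1:ℕ))⁻¹ * ((2:ℝ)^n)⁻¹ := by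
          have h4 : (0:ℝ) ≤ ((2:ℝ)^(1:ℕ))⁻¹ := by positivity
          nlinarith
      _ = ((2:ℝ)^(n+1))⁻¹ := h7

lemma g_cond {f g : ℤ_[2] → ℤ_[2]} {K : ℕ} (hg : IsDerivMod f g 1 K)
    (h : BijMod f (K+1)) : ∀ x : ℤ_[2], ‖g x - 1‖ ≤ ((2 : ℝ) ^ (1:ℕ))⁻¹ := by
  intro x
  rcases zero_or_one (g x) with h0 | h1
  · exfalso
    have hgx : ‖g x‖ ≤ ((2:ℝ)^(1:ℕ))⁻¹ := by simpa [CongMod] using h0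
    set hh : ℤ_[2] := (2:ℤ_[2])^K with hhd
    have hnh : ‖hh‖ = ((2:ℝ)^K)⁻¹ := norm_two_pow K
    have hder := hg x hh (le_of_eq hnh)
    have hKe : ((2:ℝ)^(1:ℕ))⁻¹ * ((2:ℝ)^K)⁻¹ = ((2:ℝ)^(K+1))⁻¹ := by
      rw [← mul_inv, ← pow_add, add_comm]
    have hbound : ‖f (x + hh) - f x‖ ≤ ((2:ℝ)^(K+1))⁻¹ := by
      have hsplit : f (x + hh) - f x = (f (x + hh) - f x - g x * hh) + g x * hh := by ring
      have h1 : ‖f (x + hh) - f x - g x * hh‖ ≤ ((2:ℝ)^(K+1))⁻¹ := by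
        refine le_trans hder ?_
        rw [hnh, hKe]
      have h2 : ‖g x * hh‖ ≤ ((2:ℝ)^(K+1))⁻¹ := by
        rw [norm_mul, hnh, ← hKe]
        have h4 : (0:ℝ) ≤ ((2:ℝ)^K)⁻¹ := by positivity
        nlinarith
      rw [hsplit]
      exact le_trans (PadicInt.nonarchimedean _ _) (max_le h1 h2)
    have hcong : CongMod (K+1) (x + hh) x := h.1 _ _ hbound
    have hfin : ‖hh‖ ≤ ((2:ℝ)^(K+1))⁻¹ := by
      have : x + hh - x = hh := by ring
      rw [CongMod, this] at hcong
      exact hcong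
    rw [hnh] at hfin
    have hp : (0:ℝ) < 2^K := by positivity
    have e1 : (2:ℝ)^K * ((2:ℝ)^K)⁻¹ = 1 := mul_inv_cancel₀ (ne_of_gt hp)
    have e2 : (2:ℝ)^(K+1) * ((2:ℝ)^(K+1))⁻¹ = 1 := mul_inv_cancel₀ (by positivity)
    have e3 : (2:ℝ)^(K+1) = 2^K * 2 := pow_succ 2 K
    nlinarith [mul_le_mul_of_nonneg_left hfin hp.le]
  · simpa [CongMod] using h1

/-- Bijectivity criterion for a T-function uniformly differentiable modulo 2. -/
theorem bijectivity_criterion (f g : ℤ_[2] → ℤ_[2]) (K : ℕ)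
    (hf : OneLip f) (hg : IsDerivMod f g 1 K) :
    (BijectiveT f ↔ (BijMod f K ∧ ∀ x : ℤ_[2], ‖g x - 1‖ ≤ ((2 : ℝ) ^ (1 : ℕ))⁻¹)) ∧
    (BijectiveT f ↔ BijMod f (K + 1)) := by
  have hAC : BijectiveT f → BijMod f (K+1) := fun hA => hA (K+1) (Nat.le_add_left 1 K)
  have hCB : BijMod f (K+1) → BijMod f K ∧ ∀ x : ℤ_[2], ‖g x - 1‖ ≤ ((2:ℝ)^(1:ℕ))⁻¹ :=
    fun hC => ⟨bijMod_descend hf hC, g_cond hg hC⟩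
  have hBA : (BijMod f K ∧ ∀ x : ℤ_[2], ‖g x - 1‖ ≤ ((2:ℝ)^(1:ℕ))⁻¹) → BijectiveT f := by
    rintro ⟨h1, h2⟩ n _
    have hup : ∀ m, BijMod f (K + m) := by
      intro m
      induction m with
      | zero => simpa using h1
      | succ k ih => exact bijMod_step hg h2 (Nat.le_add_right K k) ih
    rcases Nat.le_total n K with hle | hge
    · exact bijMod_mono hf hle h1
    · have := hup (n - K)
      rwa [Nat.add_sub_cancel' hge] at this
  exact ⟨⟨fun hA => hCB (hAC hA), hBA⟩, ⟨hAC, fun hC => hBA (hCB hC)⟩⟩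
end

section
/- Let f : ℤ₂ → ℤ₂ be a 1-Lipschitz map and let g : ℤ₂ → ℤ₂ be a derivative of f modulo 4 with parameter K. Then f is transitive if and only if f is transitive modulo 2^(K+2). -/
open Function Finset

namespace TC



lemma two_pow_inv_eq (s : ℕ) : ((2:ℝ)^s)⁻¹ = ((2:ℕ):ℝ)^(-(s:ℤ)) := by
  rw [zpow_neg, zpow_natCast]; norm_num

lemma congMod_iff (s : ℕ) (a b : ℤ_[2]) :
    CongMod s a b ↔ PadicInt.toZModPow s a = PadicInt.toZModPow s b := by
  rw [CongMod, two_pow_inv_eq, PadicInt.norm_le_pow_iff_mem_span_pow,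
    ← PadicInt.ker_toZModPow, RingHom.mem_ker, map_sub, sub_eq_zero]

lemma norm_two_pow (n : ℕ) : ‖(2:ℤ_[2])^n‖ = ((2:ℝ)^n)⁻¹ := by
  have := PadicInt.norm_p_pow (p := 2) n
  rw [two_pow_inv_eq]
  simpa using this

noncomputable def zlift (n : ℕ) (a : ZMod (2^n)) : ℤ_[2] := ((a.val : ℕ) : ℤ_[2])

lemma toZModPow_zlift (n : ℕ) (a : ZMod (2^n)) :
    PadicInt.toZModPow n (zlift n a) = a := by
  haveI : NeZero (2^n) := ⟨pow_ne_zero n (by norm_num)⟩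
  rw [zlift, map_natCast, ZMod.natCast_zmod_val]

lemma congMod_zlift (n : ℕ) (x : ℤ_[2]) :
    CongMod n (zlift n (PadicInt.toZModPow n x)) x := by
  rw [congMod_iff, toZModPow_zlift]

noncomputable def Fmod (f : ℤ_[2] → ℤ_[2]) (n : ℕ) : ZMod (2^n) → ZMod (2^n) :=
  fun a => PadicInt.toZModPow n (f (zlift n a))

lemma Fmod_comm {f : ℤ_[2] → ℤ_[2]} (hf : OneLip f) (n : ℕ) (x : ℤ_[2]) :
    Fmod f n (PadicInt.toZModPow n x) = PadicInt.toZModPow n (f x) := by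
  rw [Fmod, ← congMod_iff]
  exact le_trans (hf _ _) (congMod_zlift n x)

lemma Fmod_iter {f : ℤ_[2] → ℤ_[2]} (hf : OneLip f) (n : ℕ) (x : ℤ_[2]) (i : ℕ) :
    (Fmod f n)^[i] (PadicInt.toZModPow n x) = PadicInt.toZModPow n (f^[i] x) := by
  induction i with
  | zero => rfl
  | succ i ih => rw [Function.iterate_succ_apply', ih, Fmod_comm hf, Function.iterate_succ_apply']

section Orbit
set_option linter.unusedSectionVars false
variable {α : Type*} [Fintype α] [DecidableEq α] {F : α → α}

lemma orbit_minimalPeriod (H : ∀ a b : α, ∃ i, F^[i] a = b) (a : α) :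
    Function.minimalPeriod F a = Fintype.card α := by
  have hper : a ∈ Function.periodicPts F := by
    obtain ⟨i, hi⟩ := H (F a) a
    exact ⟨i + 1, Nat.succ_pos i, by rwa [Function.IsPeriodicPt, Function.IsFixedPt,
      Function.iterate_succ_apply]⟩
  have hp : 0 < Function.minimalPeriod F a := Function.minimalPeriod_pos_of_mem_periodicPts hper
  set p := Function.minimalPeriod F a with hpdef
  have hsurj : Function.Surjective (fun i : Fin p => F^[(i:ℕ)] a) := by
    intro b
    obtain ⟨i, hi⟩ := H a b
    refine ⟨⟨i % p, Nat.mod_lt i hp⟩, ?_⟩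
    show F^[i % p] a = b
    rwa [Function.iterate_mod_minimalPeriod_eq]
  have hinj : Function.Injective (fun i : Fin p => F^[(i:ℕ)] a) := by
    intro i j hij
    exact Fin.ext (Function.iterate_injOn_Iio_minimalPeriod i.isLt j.isLt hij)
  have h1 : Fintype.card α ≤ p := by simpa using Fintype.card_le_of_surjective _ hsurj
  have h2 : p ≤ Fintype.card α := by simpa using Fintype.card_le_of_injective _ hinj
  omega

lemma orbit_hit (H : ∀ a b : α, ∃ i, F^[i] a = b) (a b : α) :
    ∃ i < Fintype.card α, F^[i] a = b := by
  have hm := orbit_minimalPeriod H a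
  obtain ⟨i, hi⟩ := H a b
  have hp : 0 < Function.minimalPeriod F a := by
    rw [hm]; exact Fintype.card_pos_iff.mpr ⟨a⟩
  exact ⟨i % Function.minimalPeriod F a, by rw [← hm]; exact Nat.mod_lt i hp,
    by rwa [Function.iterate_mod_minimalPeriod_eq]⟩

lemma orbit_period (H : ∀ a b : α, ∃ i, F^[i] a = b) (a : α) :
    F^[Fintype.card α] a = a := by
  rw [← orbit_minimalPeriod H a]
  exact Function.isPeriodicPt_minimalPeriod F a

lemma orbit_ne (H : ∀ a b : α, ∃ i, F^[i] a = b) (a : α) {i j : ℕ}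
    (hi : i < Fintype.card α) (hj : j < Fintype.card α) (hij : i ≠ j) :
    F^[i] a ≠ F^[j] a := by
  rw [← orbit_minimalPeriod H a] at hi hj
  intro h
  exact hij (Function.iterate_injOn_Iio_minimalPeriod hi hj h)

lemma orbit_inj (H : ∀ a b : α, ∃ i, F^[i] a = b) :
    Function.Injective F := by
  have hsurj : Function.Surjective F := by
    intro b
    obtain ⟨i, hi⟩ := H (F b) b
    exact ⟨F^[i] b, by
      rw [← Function.iterate_succ_apply' F i b, Function.iterate_succ_apply F i b]; exact hi⟩
  exact Finite.injective_iff_surjective.mpr hsurj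

end Orbit

set_option linter.unusedSectionVars false

variable {f : ℤ_[2] → ℤ_[2]}

instance iZ (n : ℕ) : NeZero (2^n) := ⟨pow_ne_zero n (by norm_num)⟩

lemma card_zmod (n : ℕ) : Fintype.card (ZMod (2^n)) = 2^n := ZMod.card _

-- unbounded hitting in ZMod from unbounded hitting in ℤ₂
lemma unbounded_zmod (hf : OneLip f) {n : ℕ}
    (H : ∀ x y : ℤ_[2], ∃ i, CongMod n (f^[i] x) y) :
    ∀ a b : ZMod (2^n), ∃ i, (Fmod f n)^[i] a = b := by
  intro a b
  obtain ⟨i, hi⟩ := H (zlift n a) (zlift n b)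
  refine ⟨i, ?_⟩
  have := (congMod_iff n _ _).mp hi
  rw [← toZModPow_zlift n a, Fmod_iter hf, this, toZModPow_zlift]

lemma transMod_of_unbounded (hf : OneLip f) {n : ℕ}
    (H : ∀ x y : ℤ_[2], ∃ i, CongMod n (f^[i] x) y) : TransMod f n := by
  intro x y
  obtain ⟨i, hilt, hi⟩ := orbit_hit (unbounded_zmod hf H)
    (PadicInt.toZModPow n x) (PadicInt.toZModPow n y)
  refine ⟨i, by rwa [card_zmod] at hilt, ?_⟩
  rw [congMod_iff, ← Fmod_iter hf, hi]

lemma transMod_unbounded_of (hT : TransMod f n) :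
    ∀ x y : ℤ_[2], ∃ i, CongMod n (f^[i] x) y := by
  intro x y; obtain ⟨i, _, h⟩ := hT x y; exact ⟨i, h⟩

lemma congMod_mono {m n : ℕ} (h : m ≤ n) {a b : ℤ_[2]} (hc : CongMod n a b) :
    CongMod m a b :=
  le_trans hc (by
    apply inv_anti₀ (by positivity)
    exact pow_le_pow_right₀ (by norm_num) h)

lemma transMod_mono {N n : ℕ} (h : n ≤ N) (hf : OneLip f) (hT : TransMod f N) :
    TransMod f n :=
  transMod_of_unbounded hf fun x y => by
    obtain ⟨i, _, hi⟩ := hT x y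
    exact ⟨i, congMod_mono h hi⟩

lemma period_all (hf : OneLip f) {n : ℕ} (hT : TransMod f n) (z : ℤ_[2]) :
    CongMod n (f^[2^n] z) z := by
  rw [congMod_iff, ← Fmod_iter hf]
  have := orbit_period (unbounded_zmod hf (transMod_unbounded_of hT))
    (PadicInt.toZModPow n z)
  rwa [card_zmod] at this

lemma not_cong (hf : OneLip f) {n : ℕ} (hT : TransMod f (n+1)) (z : ℤ_[2]) :
    ¬ CongMod (n+1) (f^[2^n] z) z := by
  rw [congMod_iff, ← Fmod_iter hf]
  have := orbit_ne (unbounded_zmod hf (transMod_unbounded_of hT))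
    (PadicInt.toZModPow (n+1) z) (i := 2^n) (j := 0)
    (by rw [card_zmod]; exact pow_lt_pow_right₀ (by norm_num) (Nat.lt_succ_self n))
    (by rw [card_zmod]; positivity) (by positivity)
  simpa using this

lemma inj_mod (hf : OneLip f) {n : ℕ} (hT : TransMod f n) {a b : ℤ_[2]}
    (h : CongMod n (f a) (f b)) : CongMod n a b := by
  rw [congMod_iff] at h ⊢
  exact orbit_inj (unbounded_zmod hf (transMod_unbounded_of hT))
    (by rw [Fmod_comm hf, Fmod_comm hf]; exact h)

variable {g : ℤ_[2] → ℤ_[2]} {K : ℕ}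

lemma rho_pos (s : ℕ) : (0:ℝ) < ((2:ℝ)^s)⁻¹ := by positivity

lemma rho_le {a b : ℕ} (h : a ≤ b) : ((2:ℝ)^b)⁻¹ ≤ ((2:ℝ)^a)⁻¹ := by
  apply inv_anti₀ (by positivity)
  exact pow_le_pow_right₀ (by norm_num) h

lemma rho_mul (a b : ℕ) : ((2:ℝ)^a)⁻¹ * ((2:ℝ)^b)⁻¹ = ((2:ℝ)^(a+b))⁻¹ := by
  rw [pow_add, mul_inv]

lemma nsub (a b : ℤ_[2]) : ‖a - b‖ ≤ max ‖a‖ ‖b‖ := by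
  rw [sub_eq_add_neg]
  simpa using PadicInt.nonarchimedean a (-b)

lemma g_le_one (hf : OneLip f) (hg : IsDerivMod f g 2 K) (x : ℤ_[2]) : ‖g x‖ ≤ 1 := by
  set h : ℤ_[2] := 2^K with hhdef
  have hh : ‖h‖ = ((2:ℝ)^K)⁻¹ := norm_two_pow K
  have h1 := hg x h (le_of_eq hh)
  have h2 : ‖f (x+h) - f x‖ ≤ ‖h‖ := by simpa using hf (x+h) x
  have key : g x * h = (f (x+h) - f x) - (f (x+h) - f x - g x * h) := by ring
  have h3 : ‖g x * h‖ ≤ ‖h‖ := by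
    rw [key]
    refine le_trans (nsub _ _) (max_le h2 (le_trans h1 ?_))
    calc ((2:ℝ)^2)⁻¹ * ‖h‖ ≤ 1 * ‖h‖ := by
          apply mul_le_mul_of_nonneg_right (by norm_num) (norm_nonneg _)
      _ = ‖h‖ := one_mul _
  rw [norm_mul] at h3
  have hpos : (0:ℝ) < ‖h‖ := by rw [hh]; exact rho_pos K
  exact le_of_mul_le_mul_right (by linarith) hpos

lemma g_unit (hf : OneLip f) (hg : IsDerivMod f g 2 K) (hT : TransMod f (K+1))
    (x : ℤ_[2]) : ‖g x‖ = 1 := by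
  by_contra hne
  have hlt : ‖g x‖ < 1 := lt_of_le_of_ne (g_le_one hf hg x) hne
  have hle : ‖g x‖ ≤ ((2:ℝ)^1)⁻¹ := by
    have := (PadicInt.norm_le_pow_iff_norm_lt_pow_add_one (g x) (-1)).mpr (by
      simpa using hlt)
    calc ‖g x‖ ≤ ((2:ℕ):ℝ)^(-1:ℤ) := this
      _ = ((2:ℝ)^1)⁻¹ := by norm_num
  set h : ℤ_[2] := 2^K with hhdef
  have hh : ‖h‖ = ((2:ℝ)^K)⁻¹ := norm_two_pow K
  have h1 := hg x h (le_of_eq hh)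
  have key : f (x+h) - f x = g x * h + (f (x+h) - f x - g x * h) := by ring
  have hcong : CongMod (K+1) (f (x+h)) (f x) := by
    rw [CongMod, key]
    refine le_trans (PadicInt.nonarchimedean _ _) (max_le ?_ (le_trans h1 ?_))
    · rw [norm_mul, hh]
      calc ‖g x‖ * ((2:ℝ)^K)⁻¹ ≤ ((2:ℝ)^1)⁻¹ * ((2:ℝ)^K)⁻¹ :=
            mul_le_mul_of_nonneg_right hle (le_of_lt (rho_pos K))
        _ = ((2:ℝ)^(K+1))⁻¹ := by rw [rho_mul]; ring_nf
    · rw [hh, rho_mul]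
      exact rho_le (by omega)
  have := inj_mod hf hT hcong
  rw [CongMod, add_sub_cancel_left, hh] at this
  have := lt_of_le_of_lt this (by
    apply inv_strictAnti₀ (by positivity)
    exact pow_lt_pow_right₀ (by norm_num) (Nat.lt_succ_self K) : ((2:ℝ)^(K+1))⁻¹ < ((2:ℝ)^K)⁻¹)
  exact lt_irrefl _ this

lemma g_locally_const (hg : IsDerivMod f g 2 K) (x h : ℤ_[2])
    (hh : ‖h‖ ≤ ((2:ℝ)^K)⁻¹) : CongMod 2 (g (x+h)) (g x) := by
  set h' : ℤ_[2] := 2^K with h'def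
  have hh' : ‖h'‖ = ((2:ℝ)^K)⁻¹ := norm_two_pow K
  have e1 := hg (x+h) h' (le_of_eq hh')
  have e2' := hg x (h+h') (by
    refine le_trans (PadicInt.nonarchimedean h h') (max_le hh (le_of_eq hh')))
  have e2 : ‖f (x + h + h') - f x - g x * (h+h')‖ ≤ ((2:ℝ)^2)⁻¹ * ‖h+h'‖ := by
    rwa [← add_assoc] at e2'
  have e3 := hg x h hh
  have key : (g (x+h) - g x) * h' =
      (f (x + h + h') - f x - g x * (h+h')) - (f (x+h) - f x - g x * h)
      - (f (x + h + h') - f (x+h) - g (x+h) * h') := by ring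
  have hb : ∀ z : ℤ_[2], ‖z‖ ≤ ((2:ℝ)^K)⁻¹ → ((2:ℝ)^2)⁻¹ * ‖z‖ ≤ ((2:ℝ)^(K+2))⁻¹ := by
    intro z hz
    calc ((2:ℝ)^2)⁻¹ * ‖z‖ ≤ ((2:ℝ)^2)⁻¹ * ((2:ℝ)^K)⁻¹ :=
          mul_le_mul_of_nonneg_left hz (le_of_lt (rho_pos 2))
      _ = ((2:ℝ)^(K+2))⁻¹ := by rw [rho_mul]; ring_nf
  have hnorm : ‖(g (x+h) - g x) * h'‖ ≤ ((2:ℝ)^(K+2))⁻¹ := by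
    rw [key]
    refine le_trans (nsub _ _) (max_le (le_trans (nsub _ _) (max_le ?_ ?_)) ?_)
    · exact le_trans e2 (hb _ (le_trans (PadicInt.nonarchimedean h h')
        (max_le hh (le_of_eq hh'))))
    · exact le_trans e3 (hb _ hh)
    · exact le_trans e1 (hb _ (le_of_eq hh'))
  rw [norm_mul, hh'] at hnorm
  rw [CongMod]
  have hpos := rho_pos K
  have heq : ((2:ℝ)^(K+2))⁻¹ = ((2:ℝ)^2)⁻¹ * ((2:ℝ)^K)⁻¹ := by rw [rho_mul]; ring_nf
  rw [heq] at hnorm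
  exact le_of_mul_le_mul_right hnorm hpos

lemma iter_deriv (hg : IsDerivMod f g 2 K) {n : ℕ} (hn : K ≤ n) (x h : ℤ_[2])
    (hh : ‖h‖ ≤ ((2:ℝ)^n)⁻¹) (j : ℕ) :
    ‖f^[j] (x+h) - f^[j] x - h * ∏ i ∈ Finset.range j, g (f^[i] x)‖
      ≤ ((2:ℝ)^2)⁻¹ * ‖h‖ := by
  induction j with
  | zero => simp
  | succ j ih =>
    set P : ℤ_[2] := ∏ i ∈ Finset.range j, g (f^[i] x) with hP
    set E : ℤ_[2] := f^[j] (x+h) - f^[j] x - h * P with hE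
    set h' : ℤ_[2] := h * P + E with hh'def
    have hfact : f^[j] (x+h) = f^[j] x + h' := by rw [hh'def, hE]; ring
    have hh'1 : ‖h'‖ ≤ ‖h‖ := by
      refine le_trans (PadicInt.nonarchimedean _ _) (max_le ?_ ?_)
      · rw [norm_mul]
        exact mul_le_of_le_one_right (norm_nonneg h) (PadicInt.norm_le_one P)
      · refine le_trans ih ?_
        calc ((2:ℝ)^2)⁻¹ * ‖h‖ ≤ 1 * ‖h‖ :=
              mul_le_mul_of_nonneg_right (by norm_num) (norm_nonneg _)
          _ = ‖h‖ := one_mul _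
    have e := hg (f^[j] x) h' (le_trans hh'1 (le_trans hh (rho_le hn)))
    have key : f^[j+1] (x+h) - f^[j+1] x - h * ∏ i ∈ Finset.range (j+1), g (f^[i] x)
        = (f (f^[j] x + h') - f (f^[j] x) - g (f^[j] x) * h') + g (f^[j] x) * E := by
      rw [Finset.prod_range_succ, Function.iterate_succ_apply', Function.iterate_succ_apply',
        hfact, ← hP]
      ring
    rw [key]
    refine le_trans (PadicInt.nonarchimedean _ _) (max_le ?_ ?_)
    · refine le_trans e ?_
      exact mul_le_mul_of_nonneg_left hh'1 (le_of_lt (rho_pos 2))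
    · rw [norm_mul]
      refine le_trans (mul_le_of_le_one_left (norm_nonneg E) (PadicInt.norm_le_one _)) ih

lemma dichotomy {n : ℕ} {d : ℤ_[2]} (hd : ‖d‖ ≤ ((2:ℝ)^n)⁻¹) :
    ‖d‖ ≤ ((2:ℝ)^(n+1))⁻¹ ∨ ‖d - 2^n‖ ≤ ((2:ℝ)^(n+1))⁻¹ := by
  have hmem : d ∈ (Ideal.span {((2:ℕ) : ℤ_[2]) ^ n} : Ideal ℤ_[2]) := by
    rw [← PadicInt.norm_le_pow_iff_mem_span_pow]
    calc ‖d‖ ≤ ((2:ℝ)^n)⁻¹ := hd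
      _ = ((2:ℕ):ℝ)^(-(n:ℤ)) := by rw [zpow_neg, zpow_natCast]; norm_num
  obtain ⟨w, hw⟩ := Ideal.mem_span_singleton.mp hmem
  have h2 : ((2:ℕ) : ℤ_[2]) = (2 : ℤ_[2]) := by norm_num
  rw [h2] at hw
  have hcases : ∀ a : ZMod (2^1), a = 0 ∨ a = 1 := by decide
  rcases hcases (PadicInt.toZModPow 1 w) with hc | hc
  · left
    have : CongMod 1 w 0 := by rw [congMod_iff]; simpa using hc
    rw [CongMod, sub_zero] at this
    rw [hw, norm_mul, norm_two_pow]
    calc ((2:ℝ)^n)⁻¹ * ‖w‖ ≤ ((2:ℝ)^n)⁻¹ * ((2:ℝ)^1)⁻¹ :=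
          mul_le_mul_of_nonneg_left this (le_of_lt (rho_pos n))
      _ = ((2:ℝ)^(n+1))⁻¹ := rho_mul n 1
  · right
    have : CongMod 1 w 1 := by rw [congMod_iff]; simpa using hc
    rw [CongMod] at this
    have heq : d - 2^n = 2^n * (w - 1) := by rw [hw]; ring
    rw [heq, norm_mul, norm_two_pow]
    calc ((2:ℝ)^n)⁻¹ * ‖w - 1‖ ≤ ((2:ℝ)^n)⁻¹ * ((2:ℝ)^1)⁻¹ :=
          mul_le_mul_of_nonneg_left this (le_of_lt (rho_pos n))
      _ = ((2:ℝ)^(n+1))⁻¹ := rho_mul n 1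

lemma periodic_prod {M : Type*} [CommMonoid M] (u : ℕ → M) (p : ℕ)
    (hu : ∀ i, u (i + p) = u i) (m : ℕ) :
    ∏ i ∈ Finset.range (p * m), u i = (∏ i ∈ Finset.range p, u i)^m := by
  have hshift : ∀ m i, u (i + p * m) = u i := by
    intro m
    induction m with
    | zero => simp
    | succ m ih =>
      intro i
      have : i + p * (m+1) = (i + p * m) + p := by ring
      rw [this, hu, ih]
  induction m with
  | zero => simp
  | succ m ih =>
    rw [Nat.mul_succ, Finset.prod_range_add, ih, pow_succ]
    congr 1
    apply Finset.prod_congr rfl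
    intro i _
    rw [show p * m + i = i + p * m by ring, hshift]

lemma units_sq : ∀ v : (ZMod (2^2))ˣ, v^2 = 1 := by decide

lemma prod_cong (hf : OneLip f) (hg : IsDerivMod f g 2 K)
    (hTK : TransMod f K) (hTK1 : TransMod f (K+1)) {n : ℕ} (hn : K + 1 ≤ n)
    (x : ℤ_[2]) :
    CongMod 2 (∏ i ∈ Finset.range (2^n), g (f^[i] x)) 1 := by
  set u : ℕ → ZMod (2^2) := fun i => PadicInt.toZModPow 2 (g (f^[i] x)) with hu
  have hper : ∀ i, u (i + 2^K) = u i := by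
    intro i
    have hper0 := period_all hf hTK (f^[i] x)
    have hiter : f^[i + 2^K] x = f^[2^K] (f^[i] x) := by
      rw [add_comm, Function.iterate_add_apply]
    have hcong : CongMod 2 (g (f^[i + 2^K] x)) (g (f^[i] x)) := by
      have := g_locally_const hg (f^[i] x) (f^[2^K] (f^[i] x) - f^[i] x)
        (by rw [CongMod] at hper0; exact hper0)
      rw [add_sub_cancel] at this
      rwa [hiter]
    rw [hu]
    exact (congMod_iff 2 _ _).mp hcong
  have hsplit : (2:ℕ)^n = 2^K * 2^(n-K) := by
    rw [← pow_add]
    congr 1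
    omega
  have hmap : PadicInt.toZModPow 2 (∏ i ∈ Finset.range (2^n), g (f^[i] x))
      = ∏ i ∈ Finset.range (2^n), u i := by
    rw [map_prod]
  rw [congMod_iff, map_one, hmap, hsplit, periodic_prod u (2^K) hper]
  -- now : (∏ i ∈ range 2^K, u i)^(2^(n-K)) = 1
  have hQunit : IsUnit (∏ i ∈ Finset.range (2^K), u i) := by
    apply Finset.prod_induction _ IsUnit (fun a b ha hb => ha.mul hb) isUnit_one
    intro i _
    exact (PadicInt.isUnit_iff.mpr (g_unit hf hg hTK1 (f^[i] x))).map _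
  obtain ⟨v, hv⟩ := hQunit
  rw [← hv, ← Units.val_pow_eq_pow_val]
  have hnk : 2^(n-K) = 2^(n-K-1) * 2 := by
    rw [mul_comm, ← pow_succ']
    congr 1
    omega
  rw [hnk, pow_mul, units_sq, Units.val_one]
def OddT (f : ℤ_[2] → ℤ_[2]) (n : ℕ) : Prop :=
  ∀ z : ℤ_[2], ‖f^[2^n] z - z - 2^n‖ ≤ ((2:ℝ)^(n+1))⁻¹

lemma claim1 (hf : OneLip f) {n : ℕ} (hT : TransMod f n) (hO : OddT f n) :
    TransMod f (n+1) := by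
  apply transMod_of_unbounded hf
  intro x y
  obtain ⟨i, _, hi⟩ := hT x y
  rw [CongMod] at hi
  rcases dichotomy hi with hc | hc
  · exact ⟨i, hc⟩
  · refine ⟨i + 2^n, ?_⟩
    have hit : f^[i + 2^n] x = f^[2^n] (f^[i] x) := by
      rw [add_comm, Function.iterate_add_apply]
    have hO' := hO (f^[i] x)
    rw [CongMod, hit]
    have key : f^[2^n] (f^[i] x) - y =
        (f^[2^n] (f^[i] x) - f^[i] x - 2^n) + (f^[i] x - y - 2^n) + 2^(n+1) := by
      rw [pow_succ]; ring
    rw [key]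
    refine le_trans (PadicInt.nonarchimedean _ _) (max_le (le_trans
      (PadicInt.nonarchimedean _ _) (max_le hO' hc)) ?_)
    exact le_of_eq (norm_two_pow (n+1))

lemma oddT_base (hf : OneLip f) {n : ℕ} (hT2 : TransMod f (n+1)) (hT : TransMod f n) :
    OddT f n := by
  intro z
  have h1 := period_all hf hT z
  rw [CongMod] at h1
  rcases dichotomy h1 with hc | hc
  · exact absurd hc (not_cong hf hT2 z)
  · exact hc

lemma oddT_step (hf : OneLip f) (hg : IsDerivMod f g 2 K)
    (hTK : TransMod f K) (hTK1 : TransMod f (K+1)) {n : ℕ} (hn : K + 1 ≤ n)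
    (hT : TransMod f n) (hO : OddT f n) : OddT f (n+1) := by
  intro z
  set h : ℤ_[2] := f^[2^n] z - z with hdef
  have hOz : ‖h - 2^n‖ ≤ ((2:ℝ)^(n+1))⁻¹ := hO z
  have hh : ‖h‖ ≤ ((2:ℝ)^n)⁻¹ := period_all hf hT z
  set P : ℤ_[2] := ∏ i ∈ Finset.range (2^n), g (f^[i] z) with hPdef
  have hA := iter_deriv hg (show K ≤ n by omega) z h hh (2^n)
  set A : ℤ_[2] := f^[2^n] (z+h) - f^[2^n] z - h * P with hAdef
  have hzh : z + h = f^[2^n] z := by rw [hdef]; ring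
  have hF : f^[2^(n+1)] z = f^[2^n] (z + h) := by
    rw [hzh, ← Function.iterate_add_apply]
    congr 1
    rw [pow_succ]; ring
  have hPc : ‖P - 1‖ ≤ ((2:ℝ)^2)⁻¹ := by
    have := prod_cong hf hg hTK hTK1 hn z
    rwa [CongMod, ← hPdef] at this
  have key : f^[2^(n+1)] z - z - 2^(n+1) =
      A + 2^n * (P - 1) + 2^(1:ℕ) * (h - 2^n) + (h - 2^n) * (P - 1) := by
    have e1 : f^[2^n] (z+h) = f^[2^n] z + h * P + A := by rw [hAdef]; ring
    rw [hF, e1, ← hzh, pow_succ]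
    ring
  have hmm : ∀ (u v : ℤ_[2]) (a b : ℕ), ‖u‖ ≤ ((2:ℝ)^a)⁻¹ → ‖v‖ ≤ ((2:ℝ)^b)⁻¹ →
      n+1+1 ≤ a+b → ‖u*v‖ ≤ ((2:ℝ)^(n+1+1))⁻¹ := by
    intro u v a b hu hv hab
    rw [norm_mul]
    calc ‖u‖*‖v‖ ≤ ((2:ℝ)^a)⁻¹ * ((2:ℝ)^b)⁻¹ :=
          mul_le_mul hu hv (norm_nonneg v) (rho_pos a).le
      _ = ((2:ℝ)^(a+b))⁻¹ := rho_mul a b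
      _ ≤ _ := rho_le hab
  rw [key]
  refine le_trans (PadicInt.nonarchimedean _ _) (max_le (le_trans
    (PadicInt.nonarchimedean _ _) (max_le (le_trans (PadicInt.nonarchimedean _ _)
    (max_le ?_ ?_)) ?_)) ?_)
  · calc ‖A‖ ≤ ((2:ℝ)^2)⁻¹ * ‖h‖ := hA
      _ ≤ ((2:ℝ)^2)⁻¹ * ((2:ℝ)^n)⁻¹ := mul_le_mul_of_nonneg_left hh (rho_pos 2).le
      _ = ((2:ℝ)^(2+n))⁻¹ := rho_mul 2 n
      _ ≤ ((2:ℝ)^(n+1+1))⁻¹ := rho_le (by omega)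
  · exact hmm _ _ n 2 (le_of_eq (norm_two_pow n)) hPc (by omega)
  · exact hmm _ _ 1 (n+1) (le_of_eq (norm_two_pow 1)) hOz (by omega)
  · exact hmm _ _ (n+1) 2 hOz hPc (by omega)


end TC

open TC in
/-- Transitivity criterion for a T-function uniformly differentiable modulo 4. -/
theorem transitivity_criterion (f g : ℤ_[2] → ℤ_[2]) (K : ℕ)
    (hf : OneLip f) (hg : IsDerivMod f g 2 K) :
    TransitiveT f ↔ TransMod f (K + 2) := by
  constructor
  · intro hT
    exact hT (K+2) (by omega)
  · intro hN
    have hTK : TransMod f K := transMod_mono (by omega) hf hN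
    have hTK1 : TransMod f (K+1) := transMod_mono (by omega) hf hN
    have key : ∀ m : ℕ, TransMod f (K+1+m) ∧ OddT f (K+1+m) := by
      intro m
      induction m with
      | zero =>
        refine ⟨by simpa using hTK1, ?_⟩
        have hN' : TransMod f ((K+1)+1) := by
          rw [show (K+1)+1 = K+2 by omega]; exact hN
        simpa using oddT_base hf hN' hTK1
      | succ m ih =>
        have hTs : TransMod f ((K+1+m)+1) := claim1 hf ih.1 ih.2
        have hOs : OddT f ((K+1+m)+1) :=
          oddT_step hf hg hTK hTK1 (by omega) ih.1 ih.2
        constructor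
        · rw [show K+1+(m+1) = (K+1+m)+1 by omega]; exact hTs
        · rw [show K+1+(m+1) = (K+1+m)+1 by omega]; exact hOs
    intro n hn
    by_cases hcase : n ≤ K+2
    · exact transMod_mono hcase hf hN
    · have heq : n = K+1 + (n - K - 1) := by omega
      rw [heq]
      exact (key (n - K - 1)).1
end

section
/- (Independence of coordinate sequences.) For every family of binary sequences ζ : ℕ → ℕ → ℤ/2ℤ there exist a 1-Lipschitz transitive map f : ℤ₂ → ℤ₂ and a point x₀ ∈ ℤ₂ such that for every i ∈ ℕ and every j with 0 ≤ j < 2^i one has δ_i(f^[j](x₀)) = ζ(i)(j). (That is, the first half-period of every i-th coordinate sequence of the orbit of x₀ under f can be prescribed arbitrarily.) -/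
open Function Finset

lemma two_inv_eq (s : ℕ) : ((2 : ℝ) ^ s)⁻¹ = (2:ℝ) ^ (-(s:ℤ)) := by
  rw [zpow_neg, zpow_natCast]

lemma cong_refl (s : ℕ) (a : ℤ_[2]) : CongMod s a a := by
  simp [CongMod]

lemma cong_symm {s a b} (h : CongMod s a b) : CongMod s b a := by
  unfold CongMod at *; rwa [norm_sub_rev]

lemma cong_trans {s a b c} (h : CongMod s a b) (h' : CongMod s b c) : CongMod s a c := by
  unfold CongMod at *
  calc ‖a - c‖ = ‖(a-b) + (b-c)‖ := by ring_nf
    _ ≤ max ‖a-b‖ ‖b-c‖ := PadicInt.nonarchimedean _ _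
    _ ≤ _ := max_le h h'

lemma cong_mono {s t : ℕ} (hst : s ≤ t) {a b} (h : CongMod t a b) : CongMod s a b := by
  unfold CongMod at *
  refine h.trans ?_
  have := pow_le_pow_right₀ (one_le_two (α := ℝ)) hst
  exact inv_anti₀ (by positivity) this

lemma cong_natCast {s : ℕ} {a b : ℕ} : CongMod s (a:ℤ_[2]) (b:ℤ_[2]) ↔ ((2:ℤ)^s ∣ (a:ℤ) - b) := by
  unfold CongMod
  rw [two_inv_eq]
  rw [show ((a:ℤ_[2]) - b) = (((a:ℤ) - b : ℤ) : ℤ_[2]) by push_cast; ring]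
  rw [show ((2:ℝ)^(-(s:ℤ))) = ((2:ℕ):ℝ)^(-(s:ℤ)) by norm_num]
  exact PadicInt.norm_int_le_pow_iff_dvd

lemma cong_appr (x : ℤ_[2]) (n : ℕ) : CongMod n x (x.appr n) := by
  unfold CongMod
  rw [two_inv_eq, show ((2:ℝ)) = ((2:ℕ):ℝ) by norm_num]
  exact (PadicInt.norm_le_pow_iff_mem_span_pow _ n).mpr (x.appr_spec n)

lemma appr_unique (x : ℤ_[2]) (n m : ℕ) (hm : m < 2^n) (h : CongMod n x m) : x.appr n = m := by
  have h1 := cong_trans (cong_symm (cong_appr x n)) h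
  rw [cong_natCast] at h1
  have h2 := x.appr_lt n
  rcases h1 with ⟨c, hc⟩
  have hP : (0:ℤ) < 2^n := by positivity
  have hb1 : (x.appr n : ℤ) - m < 2^n := by
    have : (x.appr n : ℤ) < 2^n := by exact_mod_cast h2
    have : (0:ℤ) ≤ m := by positivity
    linarith
  have hb2 : -(2^n : ℤ) < (x.appr n : ℤ) - m := by
    have : (m : ℤ) < 2^n := by exact_mod_cast hm
    have : (0:ℤ) ≤ (x.appr n : ℤ) := by positivity
    linarith
  have hlt : c < 1 := lt_of_mul_lt_mul_left (by linarith [hc]) hP.le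
  have hgt : -1 < c := by
    have : (2:ℤ)^n * (-1) < 2^n * c := by linarith [hc]
    exact lt_of_mul_lt_mul_left this hP.le
  have hc0 : c = 0 := by omega
  have : (x.appr n : ℤ) = m := by rw [hc0] at hc; linarith
  exact_mod_cast this


lemma appr_congr {x y : ℤ_[2]} {n : ℕ} (h : CongMod n x y) : x.appr n = y.appr n := by
  exact appr_unique x n (y.appr n) (y.appr_lt n) (cong_trans h (cong_appr y n))

/-- partial sums of a binary digit sequence -/
def PS (b : ℕ → ℕ) (n : ℕ) : ℕ := ∑ i ∈ range n, (b i % 2) * 2^i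

lemma PS_lt (b : ℕ → ℕ) (n : ℕ) : PS b n < 2^n := by
  induction n with
  | zero => simp [PS]
  | succ n ih =>
    rw [PS, sum_range_succ, ← PS]
    have : b n % 2 ≤ 1 := by omega
    have : (b n % 2) * 2^n ≤ 2^n := by
      calc (b n % 2) * 2^n ≤ 1 * 2^n := Nat.mul_le_mul_right _ this
        _ = 2^n := one_mul _
    have h2 : (2:ℕ)^(n+1) = 2^n + 2^n := by ring
    omega

lemma PS_succ (b : ℕ → ℕ) (n : ℕ) : PS b (n+1) = PS b n + (b n % 2) * 2^n := by
  rw [PS, sum_range_succ]; rfl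

lemma PS_dvd_sub (b : ℕ → ℕ) {n m : ℕ} (h : n ≤ m) : (2:ℤ)^n ∣ (PS b m : ℤ) - PS b n := by
  induction m with
  | zero =>
    have : n = 0 := by omega
    simp [this]
  | succ m ih =>
    rcases Nat.eq_or_lt_of_le h with h' | h'
    · simp [h']
    · have hnm : n ≤ m := by omega
      have := ih hnm
      rw [PS_succ]
      push_cast
      have h2 : (2:ℤ)^n ∣ (b m % 2 : ℤ) * 2^m := by
        refine Dvd.dvd.mul_left ?_ _
        exact pow_dvd_pow 2 hnm
      have := dvd_add this h2
      rw [show (PS b m : ℤ) + (b m : ℤ) % 2 * 2 ^ m - PS b n = (PS b m : ℤ) - PS b n + (b m : ℤ) % 2 * 2 ^ m by ring]; exact this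

lemma PS_cong (b : ℕ → ℕ) {n m : ℕ} (h : n ≤ m) :
    CongMod n ((PS b m : ℕ) : ℤ_[2]) ((PS b n : ℕ) : ℤ_[2]) :=
  cong_natCast.mpr (PS_dvd_sub b h)

/-- if two sequences agree below n, partial sums agree -/
lemma PS_eq_of (b b' : ℕ → ℕ) (n : ℕ) (h : ∀ i < n, b i % 2 = b' i % 2) :
    PS b n = PS b' n := by
  unfold PS
  exact Finset.sum_congr rfl (fun i hi => by rw [h i (mem_range.mp hi)])

/-- the 2-adic integer with binary digits `b i % 2` -/
noncomputable def ofB (b : ℕ → ℕ) : ℤ_[2] :=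
  Filter.limUnder Filter.atTop (fun n => ((PS b n : ℕ) : ℤ_[2]))

lemma ofB_cauchy (b : ℕ → ℕ) : CauchySeq (fun n => ((PS b n : ℕ) : ℤ_[2])) := by
  apply cauchySeq_of_le_geometric (C := 1) (r := (1/2 : ℝ)) (by norm_num)
  intro n
  have := PS_cong b (Nat.le_succ n)
  unfold CongMod at this
  rw [dist_eq_norm, norm_sub_rev]
  calc ‖(PS b (n+1) : ℤ_[2]) - (PS b n : ℤ_[2])‖ ≤ ((2:ℝ)^n)⁻¹ := this
    _ = 1 * (1/2)^n := by rw [one_mul, one_div, inv_pow]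

lemma ofB_spec (b : ℕ → ℕ) (n : ℕ) : CongMod n (ofB b) ((PS b n : ℕ) : ℤ_[2]) := by
  have hc := ofB_cauchy b
  have ht : Filter.Tendsto (fun m => ((PS b m : ℕ) : ℤ_[2])) Filter.atTop (nhds (ofB b)) :=
    hc.tendsto_limUnder
  unfold CongMod
  have : Filter.Tendsto (fun m => ‖((PS b m : ℕ) : ℤ_[2]) - ((PS b n : ℕ) : ℤ_[2])‖)
      Filter.atTop (nhds ‖ofB b - ((PS b n : ℕ) : ℤ_[2])‖) := by
    exact ((ht.sub tendsto_const_nhds).norm)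
  refine le_of_tendsto this ?_
  filter_upwards [Filter.eventually_ge_atTop n] with m hm
  exact PS_cong b hm

lemma ofB_appr (b : ℕ → ℕ) (n : ℕ) : (ofB b).appr n = PS b n :=
  appr_unique _ n _ (PS_lt b n) (ofB_spec b n)

lemma ofB_congr {b b' : ℕ → ℕ} {n : ℕ} (h : ∀ i < n, b i % 2 = b' i % 2) :
    CongMod n (ofB b) (ofB b') := by
  have := PS_eq_of b b' n h
  refine cong_trans (ofB_spec b n) ?_
  rw [this]
  exact cong_symm (ofB_spec b' n)

lemma PS_zero (b : ℕ → ℕ) : PS b 0 = 0 := by simp [PS]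


lemma mod_two_pow_succ (k n : ℕ) : k % 2^(n+1) = k % 2^n + (k / 2^n % 2) * 2^n := by
  set P := 2^n with hP
  have hP0 : 0 < P := pow_pos (by norm_num) n
  have e : k = (k/P/2)*(P*2) + (k % P + (k/P%2)*P) := by
    calc k = P*(k/P) + k%P := (Nat.div_add_mod k P).symm
      _ = P*(2*(k/P/2) + (k/P)%2) + k%P := by
        rw [Nat.div_add_mod, Nat.div_add_mod]
        exact (Nat.div_add_mod k P).symm
      _ = (k/P/2)*(P*2) + (k % P + (k/P%2)*P) := by ring
  have hrest : k % P + (k/P%2)*P < P*2 := by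
    have h1 : k % P < P := Nat.mod_lt _ hP0
    have h2 : (k/P%2)*P ≤ 1*P := Nat.mul_le_mul_right _ (by omega)
    omega
  calc k % 2^(n+1) = k % (P * 2) := by rw [pow_succ]
    _ = ((k/P/2)*(P*2) + (k % P + (k/P%2)*P)) % (P*2) := by rw [← e]
    _ = (k % P + (k/P%2)*P) % (P*2) := by rw [Nat.mul_add_mod']
    _ = k % P + (k/P%2)*P := Nat.mod_eq_of_lt hrest

section
variable (ζ : ℕ → ℕ → ZMod 2)

/-- the `i`-th digit of the `j`-th orbit point -/
def dg (i j : ℕ) : ℕ := (ζ i (j % 2^i) + ((j / 2^i : ℕ) : ZMod 2)).val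

lemma dg_lt (i j : ℕ) : dg ζ i j < 2 := ZMod.val_lt _

lemma dg_congr {i j j' : ℕ} (h : j % 2^(i+1) = j' % 2^(i+1)) : dg ζ i j = dg ζ i j' := by
  unfold dg
  have h1 : j % 2^i = j' % 2^i := by
    have d : (2:ℕ)^i ∣ 2^(i+1) := pow_dvd_pow 2 (Nat.le_succ i)
    rw [← Nat.mod_mod_of_dvd j d, ← Nat.mod_mod_of_dvd j' d, h]
  have h2 : ((j / 2^i : ℕ) : ZMod 2) = ((j' / 2^i : ℕ) : ZMod 2) := by
    have e : ∀ k : ℕ, ((k / 2^i : ℕ) : ZMod 2) = ((k % 2^(i+1) / 2^i : ℕ) : ZMod 2) := by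
      intro k
      rw [← ZMod.natCast_mod (k / 2^i) 2, ← Nat.mod_mul_right_div_self, ← pow_succ]
    rw [e j, e j', h]
  rw [h1, h2]

lemma dg_flip (i j : ℕ) : dg ζ i (j + 2^i) ≠ dg ζ i j := by
  unfold dg
  have h1 : (j + 2^i) % 2^i = j % 2^i := by simp [Nat.add_mod_right]
  have h2 : (j + 2^i) / 2^i = j / 2^i + 1 := by
    rw [Nat.add_div_right _ (by positivity)]
  rw [h1, h2]
  push_cast
  intro h
  have := ZMod.val_injective 2 h
  have : ((1:ZMod 2)) = 0 := by
    have := ZMod.val_injective 2 h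
    linear_combination this - (ζ i (j % 2 ^ i) + (↑(j / 2 ^ i) : ZMod 2))
  simp at this

/-- residue of `j`-th orbit point mod `2^n` -/
noncomputable def A (n j : ℕ) : ℕ := PS (fun i => dg ζ i j) n

lemma A_congr {n j j' : ℕ} (h : j % 2^n = j' % 2^n) : A ζ n j = A ζ n j' := by
  induction n with
  | zero => unfold A; rw [PS_zero, PS_zero]
  | succ n ih =>
    have hd : (2:ℕ)^n ∣ 2^(n+1) := pow_dvd_pow 2 (Nat.le_succ n)
    have hn : j % 2^n = j' % 2^n := by
      rw [← Nat.mod_mod_of_dvd j hd, ← Nat.mod_mod_of_dvd j' hd, h]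
    unfold A
    rw [PS_succ, PS_succ]
    rw [show PS (fun i => dg ζ i j) n = PS (fun i => dg ζ i j') n from ih hn,
        dg_congr ζ h]

lemma A_inj : ∀ n j j', A ζ n j = A ζ n j' → j % 2^n = j' % 2^n := by
  intro n
  induction n with
  | zero => intro j j' _; simp [Nat.mod_one]
  | succ n ih =>
    intro j j' h
    unfold A at h
    rw [PS_succ, PS_succ] at h
    have hP := PS_lt (fun i => dg ζ i j) n
    have hP' := PS_lt (fun i => dg ζ i j') n
    have hdj := dg_lt ζ n j
    have hdj' := dg_lt ζ n j'
    have hmod : ∀ k, dg ζ n k % 2 = dg ζ n k := fun k => Nat.mod_eq_of_lt (dg_lt ζ n k)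
    rw [hmod, hmod] at h
    have hlow : PS (fun i => dg ζ i j) n = PS (fun i => dg ζ i j') n := by
      have e1 : PS (fun i => dg ζ i j) n
          = (PS (fun i => dg ζ i j) n + dg ζ n j * 2^n) % 2^n := by
        rw [Nat.add_mul_mod_self_right, Nat.mod_eq_of_lt hP]
      have e2 : PS (fun i => dg ζ i j') n
          = (PS (fun i => dg ζ i j') n + dg ζ n j' * 2^n) % 2^n := by
        rw [Nat.add_mul_mod_self_right, Nat.mod_eq_of_lt hP']
      rw [e1, e2, h]
    have htop : dg ζ n j = dg ζ n j' := by
      have hmul : dg ζ n j * 2^n = dg ζ n j' * 2^n := by omega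
      exact Nat.eq_of_mul_eq_mul_right (pow_pos (by norm_num) n) hmul
    have hn := ih j j' hlow
    by_contra hne
    have hbit : j/2^n % 2 ≠ j'/2^n % 2 := by
      intro hb2
      exact hne (by rw [mod_two_pow_succ, mod_two_pow_succ, hn, hb2])
    have hsmall : ∀ k : ℕ, k % 2^n % 2^(n+1) = k % 2^n := by
      intro k
      apply Nat.mod_eq_of_lt
      calc k % 2^n < 2^n := Nat.mod_lt _ (pow_pos (by norm_num) n)
        _ ≤ 2^(n+1) := Nat.pow_le_pow_right (by norm_num) (Nat.le_succ n)
    have hsmall2 : ∀ k : ℕ, (k % 2^n + 2^n) % 2^(n+1) = k % 2^n + 2^n := by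
      intro k
      apply Nat.mod_eq_of_lt
      have : k % 2^n < 2^n := Nat.mod_lt _ (pow_pos (by norm_num) n)
      have : (2:ℕ)^(n+1) = 2^n + 2^n := by ring
      omega
    have key : ∀ k k' : ℕ, k/2^n % 2 = 0 → k'/2^n % 2 = 1 → k % 2^n = k' % 2^n →
        dg ζ n k ≠ dg ζ n k' := by
      intro k k' h0 h1 hkk
      have d1 : dg ζ n k = dg ζ n (k % 2^n) := by
        apply dg_congr
        rw [mod_two_pow_succ, h0, hsmall]
        simp
      have d2 : dg ζ n k' = dg ζ n (k % 2^n + 2^n) := by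
        apply dg_congr
        rw [mod_two_pow_succ, h1, hsmall2, hkk]
        simp
      rw [d1, d2]
      exact fun hh => dg_flip ζ n (k % 2^n) (hh.symm)
    have b1 := Nat.mod_two_eq_zero_or_one (j/2^n)
    have b2 := Nat.mod_two_eq_zero_or_one (j'/2^n)
    rcases b1 with b1 | b1 <;> rcases b2 with b2 | b2
    · exact hbit (by rw [b1, b2])
    · exact key j j' b1 b2 hn htop
    · exact key j' j b2 b1 hn.symm htop.symm
    · exact hbit (by rw [b1, b2])

lemma dg_val (i j : ℕ) : (dg ζ i j : ZMod 2) = ζ i (j % 2^i) + ((j / 2^i : ℕ) : ZMod 2) :=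
  ZMod.natCast_rightInverse _
lemma A_lt (n j : ℕ) : A ζ n j < 2^n := PS_lt _ _

lemma A_surj (n y : ℕ) (hy : y < 2^n) : ∃ j, A ζ n j = y ∧ j < 2^n := by
  have hinj : Function.Injective (fun j : Fin (2^n) => (⟨A ζ n j, A_lt ζ n j⟩ : Fin (2^n))) := by
    intro a b hab
    have h1 : A ζ n (a : ℕ) = A ζ n (b : ℕ) := congrArg Fin.val hab
    have h2 := A_inj ζ n a b h1
    rw [Nat.mod_eq_of_lt a.isLt, Nat.mod_eq_of_lt b.isLt] at h2
    exact Fin.ext h2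
  have hsurj := Finite.injective_iff_surjective.mp hinj
  obtain ⟨j, hj⟩ := hsurj ⟨y, hy⟩
  exact ⟨j, congrArg Fin.val hj, j.isLt⟩

noncomputable def inv (n y : ℕ) : ℕ :=
  Nat.find (A_surj ζ n (y % 2^n) (Nat.mod_lt _ (pow_pos (by norm_num) n)))

lemma inv_spec (n y : ℕ) : A ζ n (inv ζ n y) = y % 2^n ∧ inv ζ n y < 2^n :=
  Nat.find_spec (A_surj ζ n (y % 2^n) (Nat.mod_lt _ (pow_pos (by norm_num) n)))

/-- the orbit points -/
noncomputable def X (j : ℕ) : ℤ_[2] := ofB (fun i => dg ζ i j)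

lemma X_appr (j n : ℕ) : (X ζ j).appr n = A ζ n j := ofB_appr _ _

lemma X_spec (j n : ℕ) : CongMod n (X ζ j) ((A ζ n j : ℕ) : ℤ_[2]) := ofB_spec _ _

lemma X_cong_of_mod {n j j' : ℕ} (h : j % 2^n = j' % 2^n) :
    CongMod n (X ζ j) (X ζ j') := by
  refine cong_trans (X_spec ζ j n) ?_
  rw [A_congr ζ h]
  exact cong_symm (X_spec ζ j' n)

/-- the transitive T-function -/
noncomputable def F (x : ℤ_[2]) : ℤ_[2] :=
  ofB (fun n => dg ζ n (inv ζ (n+1) (x.appr (n+1)) + 1))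

lemma F_cong {n : ℕ} {x y : ℤ_[2]} (h : CongMod n x y) : CongMod n (F ζ x) (F ζ y) := by
  apply ofB_congr
  intro i hi
  have : x.appr (i+1) = y.appr (i+1) := appr_congr (cong_mono hi h)
  rw [this]

lemma F_oneLip : OneLip (F ζ) := by
  intro a b
  rcases eq_or_ne a b with rfl | hab
  · simp
  have hne : a - b ≠ 0 := sub_ne_zero_of_ne hab
  have hval := Nat.zero_le (a - b).valuation
  set v : ℕ := (a - b).valuation with hv
  have hnorm : ‖a - b‖ = ((2:ℝ)^v)⁻¹ := by
    rw [PadicInt.norm_eq_zpow_neg_valuation hne, two_inv_eq]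
    norm_num
    rfl
  have h1 : CongMod v a b := le_of_eq hnorm
  have := F_cong ζ h1
  unfold CongMod at this
  rw [hnorm]
  exact this

lemma F_X (j : ℕ) : F ζ (X ζ j) = X ζ (j + 1) := by
  have hX : X ζ (j+1) = ofB (fun i => dg ζ i (j+1)) := rfl
  unfold F
  rw [hX]
  congr 1
  funext n
  rw [X_appr]
  have hA : A ζ (n+1) j % 2^(n+1) = A ζ (n+1) j := Nat.mod_eq_of_lt (A_lt ζ (n+1) j)
  obtain ⟨hspec, hlt⟩ := inv_spec ζ (n+1) (A ζ (n+1) j)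
  rw [hA] at hspec
  have hmod := A_inj ζ (n+1) _ _ hspec
  rw [Nat.mod_eq_of_lt hlt] at hmod
  apply dg_congr
  rw [hmod, Nat.mod_add_mod]

lemma F_iter (j i : ℕ) : (F ζ)^[i] (X ζ j) = X ζ (j + i) := by
  induction i with
  | zero => simp
  | succ i ih => rw [Function.iterate_succ_apply', ih, F_X, Nat.add_assoc]

lemma F_iter_cong {n : ℕ} (i : ℕ) {x y : ℤ_[2]} (h : CongMod n x y) :
    CongMod n ((F ζ)^[i] x) ((F ζ)^[i] y) := by
  induction i with
  | zero => exact h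
  | succ i ih => rw [Function.iterate_succ_apply', Function.iterate_succ_apply']; exact F_cong ζ ih

lemma cong_X_self (x : ℤ_[2]) (n : ℕ) : CongMod n x (X ζ (inv ζ n (x.appr n))) := by
  obtain ⟨hspec, _⟩ := inv_spec ζ n (x.appr n)
  rw [Nat.mod_eq_of_lt (x.appr_lt n)] at hspec
  refine cong_trans (cong_appr x n) ?_
  have := X_spec ζ (inv ζ n (x.appr n)) n
  rw [hspec] at this
  exact cong_symm this

lemma F_trans (n : ℕ) : TransMod (F ζ) n := by
  intro x y
  have hP : 0 < 2^n := pow_pos (by norm_num) n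
  set j := inv ζ n (x.appr n) with hj
  set k := inv ζ n (y.appr n) with hk
  have hjlt : j < 2^n := (inv_spec ζ n (x.appr n)).2
  have hklt : k < 2^n := (inv_spec ζ n (y.appr n)).2
  refine ⟨(k + 2^n - j) % 2^n, Nat.mod_lt _ hP, ?_⟩
  have hx := cong_X_self ζ x n
  have hy := cong_X_self ζ y n
  have h1 : CongMod n ((F ζ)^[(k + 2^n - j) % 2^n] x)
      ((F ζ)^[(k + 2^n - j) % 2^n] (X ζ j)) := F_iter_cong ζ _ hx
  rw [F_iter] at h1
  have h2 : (j + (k + 2^n - j) % 2^n) % 2^n = k % 2^n := by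
    rw [Nat.add_mod_mod]
    have : j + (k + 2^n - j) = k + 2^n := by omega
    rw [this, Nat.add_mod_right]
  have h3 : CongMod n (X ζ (j + (k + 2^n - j) % 2^n)) (X ζ k) := X_cong_of_mod ζ h2
  exact cong_trans (cong_trans h1 h3) (cong_symm hy)

lemma delta_X (i j : ℕ) : delta i (X ζ j) = (dg ζ i j : ZMod 2) := by
  unfold delta
  rw [X_appr, X_appr]
  have hsucc : A ζ (i+1) j = A ζ i j + dg ζ i j * 2^i := by
    unfold A
    rw [PS_succ, Nat.mod_eq_of_lt (dg_lt ζ i j)]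
  rw [hsucc, Nat.add_sub_cancel_left, Nat.mul_div_cancel _ (pow_pos (by norm_num) i)]


end

/-- Independence of coordinate sequences: the first half-period of every coordinate
sequence can be prescribed arbitrarily by some transitive T-function and initial point. -/
theorem coordinate_sequences_independent (ζ : ℕ → ℕ → ZMod 2) :
    ∃ f : ℤ_[2] → ℤ_[2], ∃ x₀ : ℤ_[2], OneLip f ∧ TransitiveT f ∧
      ∀ i : ℕ, ∀ j : ℕ, j < 2 ^ i → delta i (f^[j] x₀) = ζ i j := by
  refine ⟨F ζ, X ζ 0, F_oneLip ζ, fun n _ => F_trans ζ n, ?_⟩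
  intro i j hj
  have : (F ζ)^[j] (X ζ 0) = X ζ j := by rw [F_iter, Nat.zero_add]
  rw [this, delta_X, dg_val, Nat.mod_eq_of_lt hj, Nat.div_eq_of_lt hj]
  simp
end

section
/- Let f : ℤ₂ → ℤ₂ be a 1-Lipschitz transitive map, x₀ ∈ ℤ₂ and n ∈ ℕ. Then for every i ≥ 0 one has δ_n(f^[i+2^n](x₀)) = δ_n(f^[i](x₀)) + 1 in ℤ/2ℤ; consequently the n-th coordinate sequence i ↦ δ_n(f^[i](x₀)) is periodic with period 2^(n+1), and it is not periodic with any period T satisfying 0 < T < 2^(n+1). -/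
open Function Finset

/- ### Auxiliary lemmas -/

lemma cong_iff (m : ℕ) (a b : ℤ_[2]) :
    CongMod m a b ↔ PadicInt.toZModPow m a = PadicInt.toZModPow m b := by
  unfold CongMod
  rw [show ((2:ℝ)^m)⁻¹ = ((2:ℕ):ℝ)^(-(m:ℤ)) by
    rw [zpow_neg, zpow_natCast]; norm_num]
  rw [PadicInt.norm_le_pow_iff_mem_span_pow, ← PadicInt.ker_toZModPow, RingHom.mem_ker,
    map_sub, sub_eq_zero]

lemma toZModPow_eq_appr (m : ℕ) (a : ℤ_[2]) :
    PadicInt.toZModPow m a = ((a.appr m : ℕ) : ZMod (2^m)) := rfl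

instance instNZ (m : ℕ) : NeZero (2^m) := ⟨pow_ne_zero _ two_ne_zero⟩

lemma pi_natCast_val (m : ℕ) (z : ZMod (2^m)) :
    PadicInt.toZModPow m ((z.val : ℕ) : ℤ_[2]) = z := by
  rw [map_natCast, ZMod.natCast_val, ZMod.cast_id]

/-- The map induced by `f` on residues mod `2^m`. -/
noncomputable def Fm (f : ℤ_[2] → ℤ_[2]) (m : ℕ) : ZMod (2^m) → ZMod (2^m) :=
  fun z => PadicInt.toZModPow m (f ((z.val : ℕ) : ℤ_[2]))

lemma Fm_comm {f : ℤ_[2] → ℤ_[2]} (hf : OneLip f) (m : ℕ) (a : ℤ_[2]) :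
    Fm f m (PadicInt.toZModPow m a) = PadicInt.toZModPow m (f a) := by
  unfold Fm
  refine (cong_iff m _ _).mp ?_
  refine le_trans (hf _ _) ?_
  exact (cong_iff m _ _).mpr (pi_natCast_val m _)

lemma Fm_iter {f : ℤ_[2] → ℤ_[2]} (hf : OneLip f) (m : ℕ) (i : ℕ) (a : ℤ_[2]) :
    (Fm f m)^[i] (PadicInt.toZModPow m a) = PadicInt.toZModPow m (f^[i] a) := by
  induction i with
  | zero => simp
  | succ i ih =>
      rw [Function.iterate_succ_apply', ih, Fm_comm hf, Function.iterate_succ_apply']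

lemma cycle_lemma {f : ℤ_[2] → ℤ_[2]} (hf : OneLip f) (m : ℕ) (htrans : TransMod f m) :
    (∀ y : ℤ_[2], CongMod m (f^[2^m] y) y) ∧
    (∀ y : ℤ_[2], ∀ j, 0 < j → j < 2^m → ¬ CongMod m (f^[j] y) y) := by
  have trans' : ∀ x z : ZMod (2^m), ∃ i < 2^m, (Fm f m)^[i] x = z := by
    intro x z
    obtain ⟨i, hi, hc⟩ := htrans ((x.val : ℕ) : ℤ_[2]) ((z.val : ℕ) : ℤ_[2])
    refine ⟨i, hi, ?_⟩
    have := (cong_iff m _ _).mp hc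
    rw [← Fm_iter hf, pi_natCast_val] at this
    rwa [pi_natCast_val] at this
  have hginj : ∀ x : ZMod (2^m),
      Function.Injective (fun i : Fin (2^m) => (Fm f m)^[i.val] x) := by
    intro x
    have hsurj : Function.Surjective (fun i : Fin (2^m) => (Fm f m)^[i.val] x) := by
      intro w
      obtain ⟨i, hi, h⟩ := trans' x w
      exact ⟨⟨i, hi⟩, h⟩
    have := (Fintype.bijective_iff_surjective_and_card
      (fun i : Fin (2^m) => (Fm f m)^[i.val] x)).mpr ⟨hsurj, by simp [ZMod.card]⟩
    exact this.1
  have hfix : ∀ x : ZMod (2^m), (Fm f m)^[2^m] x = x := by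
    intro x
    obtain ⟨i, hi, h⟩ := trans' (Fm f m x) x
    rw [← Function.iterate_succ_apply] at h
    rcases lt_or_eq_of_le (Nat.succ_le_of_lt hi) with hlt | heq
    · exfalso
      have := hginj x (a₁ := ⟨i+1, hlt⟩) (a₂ := ⟨0, Nat.two_pow_pos m⟩)
        (by simpa using h)
      simp at this
    · rwa [heq] at h
  constructor
  · intro y
    rw [cong_iff]
    rw [← Fm_iter hf]
    exact hfix _
  · intro y j hj0 hjm hc
    rw [cong_iff, ← Fm_iter hf] at hc
    have := hginj (PadicInt.toZModPow m y)
      (a₁ := ⟨j, hjm⟩) (a₂ := ⟨0, Nat.two_pow_pos m⟩) (by simpa using hc)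
    simp [Fin.ext_iff] at this
    omega

lemma transMod_zero (f : ℤ_[2] → ℤ_[2]) : TransMod f 0 := by
  intro x y
  refine ⟨0, by norm_num, ?_⟩
  unfold CongMod
  simpa using PadicInt.norm_le_one _

lemma appr_eq_of_cong {m : ℕ} {a b : ℤ_[2]} (h : CongMod m a b) : a.appr m = b.appr m := by
  have := (cong_iff m a b).mp h
  rw [toZModPow_eq_appr, toZModPow_eq_appr] at this
  have h1 : ((a.appr m : ℕ) : ZMod (2^m)).val = ((b.appr m : ℕ) : ZMod (2^m)).val := by
    rw [this]
  rwa [ZMod.val_cast_of_lt (a.appr_lt m), ZMod.val_cast_of_lt (b.appr_lt m)] at h1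

/-- Main half-period step: if `z ≡ y mod 2^n` but not mod `2^(n+1)`, digits differ. -/
lemma delta_flip {n : ℕ} {y z : ℤ_[2]} (h1 : CongMod n z y) (h2 : ¬ CongMod (n+1) z y) :
    delta n z = delta n y + 1 := by
  have hA : z.appr n = y.appr n := appr_eq_of_cong h1
  have hBC : z.appr (n+1) ≠ y.appr (n+1) := by
    intro h
    apply h2
    rw [cong_iff, toZModPow_eq_appr, toZModPow_eq_appr, h]
  obtain ⟨b, hb⟩ := PadicInt.dvd_appr_sub_appr y n (n+1) (Nat.le_succ n)
  obtain ⟨c, hc⟩ := PadicInt.dvd_appr_sub_appr z n (n+1) (Nat.le_succ n)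
  have hmono_y : y.appr n ≤ y.appr (n+1) := y.appr_mono (Nat.le_succ n)
  have hmono_z : z.appr n ≤ z.appr (n+1) := z.appr_mono (Nat.le_succ n)
  have hBlt : y.appr (n+1) < 2^(n+1) := y.appr_lt (n+1)
  have hClt : z.appr (n+1) < 2^(n+1) := z.appr_lt (n+1)
  have hpow : (0:ℕ) < 2^n := Nat.two_pow_pos n
  have hpow1 : (2:ℕ)^(n+1) = 2^n * 2 := by ring
  have hb' : y.appr (n+1) = 2^n * b + y.appr n := (Nat.sub_eq_iff_eq_add hmono_y).mp hb
  have hc' : z.appr (n+1) = 2^n * c + z.appr n := (Nat.sub_eq_iff_eq_add hmono_z).mp hc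
  have hb2 : b < 2 := by
    refine Nat.lt_of_mul_lt_mul_left (a := 2^n) ?_
    calc 2^n * b ≤ 2^n * b + y.appr n := Nat.le_add_right _ _
      _ = y.appr (n+1) := hb'.symm
      _ < 2^(n+1) := hBlt
      _ = 2^n * 2 := hpow1
  have hc2 : c < 2 := by
    refine Nat.lt_of_mul_lt_mul_left (a := 2^n) ?_
    calc 2^n * c ≤ 2^n * c + z.appr n := Nat.le_add_right _ _
      _ = z.appr (n+1) := hc'.symm
      _ < 2^(n+1) := hClt
      _ = 2^n * 2 := hpow1
  have hbc : b ≠ c := by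
    intro h
    apply hBC
    rw [hc', hb', hA, h]
  unfold delta
  rw [hb, hc, Nat.mul_div_cancel_left _ hpow, Nat.mul_div_cancel_left _ hpow]
  interval_cases b <;> interval_cases c <;> simp_all <;> decide

lemma period_mul {α : Type*} {y : ℕ → α} {a : ℕ} (h : ∀ i, y (i + a) = y i) :
    ∀ k i, y (i + k * a) = y i := by
  intro k
  induction k with
  | zero => simp
  | succ k ih =>
      intro i
      have : i + (k+1) * a = (i + k * a) + a := by ring
      rw [this, h, ih]

lemma period_gcd {α : Type*} (y : ℕ → α) :
    ∀ a b : ℕ, (∀ i, y (i + a) = y i) → (∀ i, y (i + b) = y i) →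
      ∀ i, y (i + Nat.gcd a b) = y i := by
  intro a
  induction a using Nat.strong_induction_on with
  | _ a ih =>
    intro b ha hb i
    rcases Nat.eq_zero_or_pos a with h0 | hpos
    · subst h0; simpa [Nat.gcd_zero_left] using hb i
    · rw [Nat.gcd_rec]
      refine ih (b % a) (Nat.mod_lt _ hpos) a ?_ ha i
      intro j
      calc y (j + b % a) = y (j + b % a + (b / a) * a) := (period_mul ha _ _).symm
        _ = y (j + b) := by rw [add_assoc, Nat.mod_add_div']
        _ = y j := hb j

/-- Half-period property of coordinate sequences: the second half of the period is the
negation of the first half; the `n`-th coordinate sequence has shortest period `2^(n+1)`. -/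
theorem coordinate_sequence_period (f : ℤ_[2] → ℤ_[2])
    (hf : OneLip f) (hft : TransitiveT f) (x₀ : ℤ_[2]) (n : ℕ) :
    (∀ i : ℕ, delta n (f^[i + 2 ^ n] x₀) = delta n (f^[i] x₀) + 1) ∧
    (∀ i : ℕ, delta n (f^[i + 2 ^ (n + 1)] x₀) = delta n (f^[i] x₀)) ∧
    (∀ T : ℕ, 0 < T → T < 2 ^ (n + 1) →
      ¬ (∀ i : ℕ, delta n (f^[i + T] x₀) = delta n (f^[i] x₀))) := by
  have htn : TransMod f n := by
    rcases Nat.eq_zero_or_pos n with h0 | hpos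
    · subst h0; exact transMod_zero f
    · exact hft n hpos
  have htn1 : TransMod f (n+1) := hft (n+1) (Nat.succ_le_succ (Nat.zero_le n))
  obtain ⟨hfix_n, _⟩ := cycle_lemma hf n htn
  obtain ⟨_, hnofix⟩ := cycle_lemma hf (n+1) htn1
  have part1 : ∀ i : ℕ, delta n (f^[i + 2 ^ n] x₀) = delta n (f^[i] x₀) + 1 := by
    intro i
    rw [add_comm i, Function.iterate_add_apply]
    exact delta_flip (hfix_n (f^[i] x₀))
      (hnofix (f^[i] x₀) (2^n) (Nat.two_pow_pos n)
        (Nat.pow_lt_pow_right (by norm_num) (Nat.lt_succ_self n)))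
  have part2 : ∀ i : ℕ, delta n (f^[i + 2 ^ (n + 1)] x₀) = delta n (f^[i] x₀) := by
    intro i
    have h : i + 2^(n+1) = (i + 2^n) + 2^n := by ring
    rw [h, part1 (i + 2^n), part1 i, add_assoc,
      show (1 : ZMod 2) + 1 = 0 by decide, add_zero]
  refine ⟨part1, part2, ?_⟩
  intro T hT0 hT hper
  set y : ℕ → ZMod 2 := fun i => delta n (f^[i] x₀) with hy
  have hTper : ∀ i, y (i + T) = y i := hper
  have hPper : ∀ i, y (i + 2^(n+1)) = y i := part2
  have hgcd := period_gcd y T (2^(n+1)) hTper hPper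
  set d := Nat.gcd T (2^(n+1)) with hd
  have hd_dvd : d ∣ 2^(n+1) := Nat.gcd_dvd_right _ _
  obtain ⟨k, hk, hdk⟩ := (Nat.dvd_prime_pow Nat.prime_two).mp hd_dvd
  have hdT : d ≤ T := Nat.le_of_dvd hT0 (Nat.gcd_dvd_left _ _)
  have hkn : k ≤ n := by
    by_contra hkn
    have : k = n + 1 := by omega
    subst this
    omega
  have hd2n : d ∣ 2^n := hdk ▸ pow_dvd_pow 2 hkn
  obtain ⟨m, hm⟩ := hd2n
  have h2nper : ∀ i, y (i + 2^n) = y i := by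
    intro i
    have := period_mul hgcd m i
    rwa [mul_comm, ← hm] at this
  have h1 := part1 0
  have h2 := h2nper 0
  simp only [hy] at h2
  rw [h1] at h2
  exact one_ne_zero (left_eq_add.mp h2.symm)
end
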